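/- arXiv:1506.08414 — 6 statements merged into one kernel-verified Lean document; each statement's English description precedes it below -/
import Mathlib

section
/- The 6-point set X = {(1,0), (e^{2πi/3},0), (e^{4πi/3},0), (0,1), (0,e^{2πi/3}), (0,e^{4πi/3})} ⊂ ℂ² is a spherical 2-design on S³. -/
open MeasureTheory Complex

noncomputable section

/-- The unit sphere `S³ = {(a,b) ∈ ℂ² : |a|²+|b|² = 1}`. -/
def S3 : Set (ℂ × ℂ) := {p | ‖p.1‖ ^ 2 + ‖p.2‖ ^ 2 = 1}

/-- The unit sphere `S² = {(ξ,η) ∈ ℝ×ℂ : ξ²+|η|² = 1}`. -/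
def S2 : Set (ℝ × ℂ) := {p | p.1 ^ 2 + ‖p.2‖ ^ 2 = 1}

/-- The unit circle `S¹ ⊂ ℂ`. -/
def S1 : Set ℂ := {z | ‖z‖ = 1}

/-- The Hopf map `π(a,b) = (|a|²−|b|², 2ab)`. -/
def hopf (p : ℂ × ℂ) : ℝ × ℂ :=
  (‖p.1‖ ^ 2 - ‖p.2‖ ^ 2, 2 * p.1 * p.2)

/-- The right `S¹`-action on `S³`: `(a,b)·z = (az, b z̄)`. -/
def act (p : ℂ × ℂ) (z : ℂ) : ℂ × ℂ := (p.1 * z, p.2 * starRingEnd ℂ z)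

/-- Real coordinates on `ℂ² ≅ ℝ⁴`. -/
def coords4 (p : ℂ × ℂ) : Fin 4 → ℝ := ![p.1.re, p.1.im, p.2.re, p.2.im]

/-- Real coordinates on `ℝ×ℂ ≅ ℝ³`. -/
def coords3 (p : ℝ × ℂ) : Fin 3 → ℝ := ![p.1, p.2.re, p.2.im]

/-- Real coordinates on `ℂ ≅ ℝ²`. -/
def coords2 (z : ℂ) : Fin 2 → ℝ := ![z.re, z.im]

/-- Evaluation of a complex polynomial in 4 real variables at a point of `ℂ²`. -/
def polyFun4 (p : MvPolynomial (Fin 4) ℂ) (x : ℂ × ℂ) : ℂ :=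
  MvPolynomial.eval (fun i => ((coords4 x i : ℝ) : ℂ)) p

def polyFun3 (p : MvPolynomial (Fin 3) ℂ) (x : ℝ × ℂ) : ℂ :=
  MvPolynomial.eval (fun i => ((coords3 x i : ℝ) : ℂ)) p

def polyFun2 (p : MvPolynomial (Fin 2) ℂ) (x : ℂ) : ℂ :=
  MvPolynomial.eval (fun i => ((coords2 x i : ℝ) : ℂ)) p

/-- The spherical measure on `S³ ⊂ ℂ²`, obtained from the spherical measure on the
unit sphere of `ℝ⁴` via the standard identification. -/
def μS3 : Measure (ℂ × ℂ) :=
  ((volume : Measure (EuclideanSpace ℝ (Fin 4))).toSphere).map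
    (fun x => ((⟨x.1 0, x.1 1⟩, ⟨x.1 2, x.1 3⟩) : ℂ × ℂ))

/-- The spherical measure on `S² ⊂ ℝ×ℂ`. -/
def μS2 : Measure (ℝ × ℂ) :=
  ((volume : Measure (EuclideanSpace ℝ (Fin 3))).toSphere).map
    (fun x => ((x.1 0, ⟨x.1 1, x.1 2⟩) : ℝ × ℂ))

/-- The arc-length measure on `S¹ ⊂ ℂ`. -/
def μS1 : Measure ℂ :=
  ((volume : Measure ℂ).toSphere).map (fun z => (z.1 : ℂ))

/-- `X` is a spherical `t`-design with respect to the measure `μ` (supported on a sphere),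
where `c` gives the real coordinates: the average over `X` of every polynomial of total
degree at most `t` equals its average over the sphere. -/
def IsDesign {V : Type} [MeasurableSpace V] {n : ℕ} (c : V → Fin n → ℝ) (μ : Measure V) (t : ℕ)
    (X : Finset V) : Prop :=
  X.Nonempty ∧ ∀ p : MvPolynomial (Fin n) ℂ, p.totalDegree ≤ t →
    (∑ x ∈ X, MvPolynomial.eval (fun i => ((c x i : ℝ) : ℂ)) p) / (X.card : ℂ) =
      ⨍ x, MvPolynomial.eval (fun i => ((c x i : ℝ) : ℂ)) p ∂μ

/-- The normalization of a measure to a probability measure. -/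
def mnormalize {V : Type} [MeasurableSpace V] (μ : Measure V) : Measure V :=
  (μ Set.univ)⁻¹ • μ

/-- The `S¹`-invariant probability measure on the fiber of the Hopf map through `s ∈ S³`,
realized as the pushforward of the normalized arc-length measure under `z ↦ s·z`. -/
def μfiber (s : ℂ × ℂ) : Measure (ℂ × ℂ) :=
  (mnormalize μS1).map (act s)


/-! ### Auxiliary material -/

section Aux

open Metric Set Finset
open scoped Pointwise

abbrev E4' := EuclideanSpace ℝ (Fin 4)

/-- The spherical measure on the unit sphere of `ℝ⁴`. -/
def nuS : Measure (sphere (0:E4') 1) := (volume : Measure E4').toSphere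

def sphereMap (e : E4' ≃ₗᵢ[ℝ] E4') (y : sphere (0:E4') 1) : sphere (0:E4') 1 :=
  ⟨e y.1, by
    rw [mem_sphere_zero_iff_norm, e.norm_map]
    exact mem_sphere_zero_iff_norm.1 y.2⟩

lemma continuous_sphereMap (e : E4' ≃ₗᵢ[ℝ] E4') : Continuous (sphereMap e) :=
  Continuous.subtype_mk (e.continuous.comp continuous_subtype_val) _

lemma key_image (e : E4' ≃ₗᵢ[ℝ] E4') (s : Set (sphere (0:E4') 1)) :
    Subtype.val '' (sphereMap e ⁻¹' s) = ⇑e ⁻¹' (Subtype.val '' s) := by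
  ext x
  constructor
  · rintro ⟨y, hy, rfl⟩
    exact ⟨sphereMap e y, hy, rfl⟩
  · rintro ⟨w, hw, hwx⟩
    have hx : x ∈ sphere (0:E4') 1 := by
      rw [mem_sphere_zero_iff_norm, ← e.norm_map x, ← hwx]
      exact mem_sphere_zero_iff_norm.1 w.2
    refine ⟨⟨x, hx⟩, ?_, rfl⟩
    have : sphereMap e ⟨x, hx⟩ = w := Subtype.ext hwx.symm
    show sphereMap e ⟨x,hx⟩ ∈ s
    rwa [this]

lemma smul_preimage' (e : E4' ≃ₗᵢ[ℝ] E4') (A : Set E4') :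
    Set.Ioo (0:ℝ) 1 • (⇑e ⁻¹' A) = ⇑e ⁻¹' (Set.Ioo (0:ℝ) 1 • A) := by
  ext x
  simp only [Set.mem_smul, Set.mem_preimage]
  constructor
  · rintro ⟨r, hr, a, ha, rfl⟩
    exact ⟨r, hr, e a, ha, by simp [_root_.map_smul]⟩
  · rintro ⟨r, hr, b, hb, hx⟩
    refine ⟨r, hr, e.symm b, by simpa using hb, ?_⟩
    apply e.injective
    simp [_root_.map_smul, hx]

lemma toSphere_map (e : E4' ≃ₗᵢ[ℝ] E4') : nuS.map (sphereMap e) = nuS := by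
  ext s hs
  rw [Measure.map_apply (continuous_sphereMap e).measurable hs, nuS,
    Measure.toSphere_apply' _ ((continuous_sphereMap e).measurable hs),
    Measure.toSphere_apply' _ hs, key_image, smul_preimage']
  congr 1
  exact e.measurePreserving.measure_preimage_emb e.toHomeomorph.measurableEmbedding _

instance : IsFiniteMeasure nuS := by unfold nuS; infer_instance

instance : IsFiniteMeasureOnCompacts nuS :=
  ⟨fun _ _ => lt_of_le_of_lt (measure_mono (subset_univ _)) (measure_lt_top _ _)⟩

/-- Coordinate functions on the sphere. -/
def co (i : Fin 4) : sphere (0:E4') 1 → ℝ := fun y => y.1 i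

lemma continuous_co (i : Fin 4) : Continuous (co i) :=
  (EuclideanSpace.proj (𝕜 := ℝ) i).continuous.comp continuous_subtype_val

lemma cont_integrable {F : Type*} [NormedAddCommGroup F]
    {f : sphere (0:E4') 1 → F} (hf : Continuous f) : Integrable f nuS :=
  hf.integrable_of_hasCompactSupport
    (IsCompact.of_isClosed_subset isCompact_univ (isClosed_tsupport f) (Set.subset_univ _))

lemma integral_comp_iso (e : E4' ≃ₗᵢ[ℝ] E4') {f : sphere (0:E4') 1 → ℝ} (hf : Continuous f) :
    ∫ y, f (sphereMap e y) ∂nuS = ∫ y, f y ∂nuS := by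
  conv_rhs => rw [← toSphere_map e]
  rw [integral_map (continuous_sphereMap e).aemeasurable hf.aestronglyMeasurable]

lemma moment_fst (i : Fin 4) : ∫ y, co i y ∂nuS = 0 := by
  have h := integral_comp_iso (LinearIsometryEquiv.neg ℝ (E := E4')) (continuous_co i)
  have h2 : ∀ y : sphere (0:E4') 1,
      co i (sphereMap (LinearIsometryEquiv.neg ℝ (E := E4')) y) = - co i y := by
    intro y
    simp [co, sphereMap]
  simp only [h2] at h
  rw [integral_neg] at h
  linarith

/-- sign flip in coordinate `i` -/
def flipIso (i : Fin 4) : E4' ≃ₗᵢ[ℝ] E4' :=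
  LinearIsometryEquiv.piLpCongrRight 2
    (fun k => if k = i then LinearIsometryEquiv.neg ℝ (E := ℝ) else .refl ℝ ℝ)

lemma flipIso_apply (i k : Fin 4) (x : E4') :
    flipIso i x k = if k = i then -(x k) else x k := by
  rw [flipIso, LinearIsometryEquiv.piLpCongrRight_apply]
  by_cases h : k = i
  · subst h; simp
  · simp [h]

lemma moment_mixed {i j : Fin 4} (hij : i ≠ j) :
    ∫ y, co i y * co j y ∂nuS = 0 := by
  have hc : Continuous fun y => co i y * co j y :=
    (continuous_co i).mul (continuous_co j)
  have h := integral_comp_iso (flipIso i) hc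
  have h2 : ∀ y : sphere (0:E4') 1,
      co i (sphereMap (flipIso i) y) * co j (sphereMap (flipIso i) y)
        = -(co i y * co j y) := by
    intro y
    simp only [co, sphereMap, flipIso_apply]
    simp [hij.symm]
  simp only [h2] at h
  rw [integral_neg] at h
  linarith

/-- coordinate swap -/
def swapIso (i j : Fin 4) : E4' ≃ₗᵢ[ℝ] E4' :=
  LinearIsometryEquiv.piLpCongrLeft 2 ℝ ℝ (Equiv.swap i j)

lemma swapIso_apply (i j k : Fin 4) (x : E4') :
    swapIso i j x k = x (Equiv.swap i j k) := by
  rw [swapIso, LinearIsometryEquiv.piLpCongrLeft_apply]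
  rfl

lemma moment_sq_eq (i : Fin 4) :
    ∫ y, co i y ^ 2 ∂nuS = ∫ y, co 0 y ^ 2 ∂nuS := by
  have hc : Continuous fun y : sphere (0:E4') 1 => co 0 y ^ 2 := (continuous_co 0).pow 2
  have h := integral_comp_iso (swapIso i 0) hc
  have h2 : ∀ y : sphere (0:E4') 1, co 0 (sphereMap (swapIso i 0) y) = co i y := by
    intro y
    simp only [co, sphereMap, swapIso_apply]
    rw [Equiv.swap_apply_right]
  simp only [h2] at h
  exact h

lemma sum_sq_one (y : sphere (0:E4') 1) : ∑ i, co i y ^ 2 = 1 := by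
  have h : ‖(y : E4')‖ = 1 := mem_sphere_zero_iff_norm.1 y.2
  rw [EuclideanSpace.norm_eq] at h
  rw [Real.sqrt_eq_one] at h
  simpa [co, sq_abs] using h

lemma moment_sq (i : Fin 4) :
    ∫ y, co i y ^ 2 ∂nuS = (nuS Set.univ).toReal / 4 := by
  have hint : ∀ j : Fin 4, Integrable (fun y => co j y ^ 2) nuS :=
    fun j => cont_integrable ((continuous_co j).pow 2)
  have hsum : ∫ y, (∑ j, co j y ^ 2) ∂nuS = (nuS Set.univ).toReal := by
    rw [show (fun y => ∑ j, co j y ^ 2) = fun _ => (1:ℝ) from funext sum_sq_one]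
    simp
    rfl
  rw [integral_finset_sum _ (fun j _ => hint j)] at hsum
  have he : ∀ j : Fin 4, ∫ y, co j y ^ 2 ∂nuS = ∫ y, co 0 y ^ 2 ∂nuS := fun j => moment_sq_eq j
  rw [Fin.sum_univ_four] at hsum
  rw [he 1, he 2, he 3] at hsum
  rw [moment_sq_eq i]
  linarith

end Aux

section Aux2
open Metric Set

/-! ### Transfer to `μS3` -/

def phiS (y : sphere (0:E4') 1) : ℂ × ℂ := (⟨y.1 0, y.1 1⟩, ⟨y.1 2, y.1 3⟩)

lemma continuous_mk2 {f g : sphere (0:E4') 1 → ℝ} (hf : Continuous f) (hg : Continuous g) :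
    Continuous fun y => (⟨f y, g y⟩ : ℂ) := by
  have h : (fun y => (⟨f y, g y⟩:ℂ)) = fun y => (f y : ℂ) + (g y : ℂ) * Complex.I := by
    funext y; rw [Complex.mk_eq_add_mul_I]
  rw [h]
  exact (Complex.continuous_ofReal.comp hf).add
    ((Complex.continuous_ofReal.comp hg).mul continuous_const)

lemma continuous_phiS : Continuous phiS :=
  Continuous.prodMk (continuous_mk2 (continuous_co 0) (continuous_co 1))
    (continuous_mk2 (continuous_co 2) (continuous_co 3))

lemma muS3_eq : μS3 = nuS.map phiS := rfl

lemma coord_phiS (i : Fin 4) (y : sphere (0:E4') 1) : coords4 (phiS y) i = co i y := by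
  fin_cases i <;> rfl

lemma cont_coord (i : Fin 4) : Continuous fun x : ℂ × ℂ => coords4 x i := by
  fin_cases i
  · exact Complex.continuous_re.comp continuous_fst
  · exact Complex.continuous_im.comp continuous_fst
  · exact Complex.continuous_re.comp continuous_snd
  · exact Complex.continuous_im.comp continuous_snd

lemma integral_muS3 (g : ℂ × ℂ → ℂ) (hg : Continuous g) :
    ∫ x, g x ∂μS3 = ∫ y, g (phiS y) ∂nuS := by
  rw [muS3_eq]
  exact integral_map continuous_phiS.aemeasurable hg.aestronglyMeasurable

lemma integrable_muS3 (g : ℂ × ℂ → ℂ) (hg : Continuous g) : Integrable g μS3 := by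
  rw [muS3_eq]
  exact (integrable_map_measure hg.aestronglyMeasurable continuous_phiS.aemeasurable).2
    (cont_integrable (hg.comp continuous_phiS))

lemma muS3_univ : μS3 Set.univ = nuS Set.univ := by
  rw [muS3_eq, Measure.map_apply continuous_phiS.measurable MeasurableSet.univ]
  rfl

/-- total mass -/
def VS : ℝ := (nuS Set.univ).toReal

lemma nuS_ne_zero : nuS Set.univ ≠ 0 := by
  rw [nuS, Measure.toSphere_apply_univ]
  refine mul_ne_zero ?_ (measure_ball_pos _ _ one_pos).ne'
  rw [finrank_euclideanSpace_fin]
  norm_num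

lemma VS_pos : 0 < VS :=
  ENNReal.toReal_pos nuS_ne_zero (measure_ne_top _ _)

lemma int_one : ∫ _x, (1:ℂ) ∂μS3 = ((VS : ℝ) : ℂ) := by
  rw [integral_muS3 _ continuous_const, integral_const]
  rw [Complex.real_smul, mul_one]
  rfl

lemma int_coord (i : Fin 4) : ∫ x, ((coords4 x i : ℝ) : ℂ) ∂μS3 = 0 := by
  rw [integral_muS3 (fun x => ((coords4 x i : ℝ) : ℂ))
    (Complex.continuous_ofReal.comp (cont_coord i))]
  simp only [coord_phiS]
  have h : ∫ y, ((co i y : ℝ) : ℂ) ∂nuS = ((∫ y, co i y ∂nuS : ℝ) : ℂ) := integral_ofReal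
  rw [h, moment_fst i]
  simp

lemma int_prod (i j : Fin 4) :
    ∫ x, ((coords4 x i : ℝ) : ℂ) * ((coords4 x j : ℝ) : ℂ) ∂μS3
      = if i = j then ((VS/4 : ℝ) : ℂ) else 0 := by
  have hcont : Continuous fun x : ℂ × ℂ =>
      ((coords4 x i : ℝ) : ℂ) * ((coords4 x j : ℝ) : ℂ) :=
    (Complex.continuous_ofReal.comp (cont_coord i)).mul
      (Complex.continuous_ofReal.comp (cont_coord j))
  rw [integral_muS3 _ hcont]
  simp only [coord_phiS]
  have hc : (fun y => ((co i y : ℝ) : ℂ) * ((co j y : ℝ) : ℂ))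
      = fun y => (((co i y * co j y : ℝ)) : ℂ) := by
    funext y; push_cast; ring
  have h : ∫ y, ((co i y * co j y : ℝ) : ℂ) ∂nuS
      = ((∫ y, co i y * co j y ∂nuS : ℝ) : ℂ) := integral_ofReal
  rw [hc, h]
  by_cases hij : i = j
  · subst hij
    rw [if_pos rfl]
    rw [show (fun y => co i y * co i y) = fun y => co i y ^ 2 from funext fun y => (sq _).symm,
      moment_sq i]
    rfl
  · rw [if_neg hij, moment_mixed hij]
    simp

end Aux2

section Aux3

lemma classify (a b c d : ℕ) (h : a + b + c + d ≤ 2) :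
    (∀ v : Fin 4 → ℂ, v 0 ^ a * v 1 ^ b * v 2 ^ c * v 3 ^ d = 1) ∨
    (∃ i, ∀ v : Fin 4 → ℂ, v 0 ^ a * v 1 ^ b * v 2 ^ c * v 3 ^ d = v i) ∨
    (∃ i j, ∀ v : Fin 4 → ℂ, v 0 ^ a * v 1 ^ b * v 2 ^ c * v 3 ^ d = v i * v j) := by
  have h0 : a ≤ 2 := by omega
  have h1 : b ≤ 2 := by omega
  have h2 : c ≤ 2 := by omega
  have h3 : d ≤ 2 := by omega
  interval_cases a <;> interval_cases b <;> interval_cases c <;> interval_cases d <;>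
    simp_all only [pow_zero, pow_one, pow_two, one_mul, mul_one] <;>
    first
      | omega
      | (left; intros; trivial)
      | (left; intro v; ring1)
      | (right; left; exact ⟨0, fun v => by ring1⟩)
      | (right; left; exact ⟨1, fun v => by ring1⟩)
      | (right; left; exact ⟨2, fun v => by ring1⟩)
      | (right; left; exact ⟨3, fun v => by ring1⟩)
      | (right; right; refine ⟨0, 0, fun v => ?_⟩; ring1)
      | (right; right; refine ⟨0, 1, fun v => ?_⟩; ring1)
      | (right; right; refine ⟨0, 2, fun v => ?_⟩; ring1)
      | (right; right; refine ⟨0, 3, fun v => ?_⟩; ring1)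
      | (right; right; refine ⟨1, 1, fun v => ?_⟩; ring1)
      | (right; right; refine ⟨1, 2, fun v => ?_⟩; ring1)
      | (right; right; refine ⟨1, 3, fun v => ?_⟩; ring1)
      | (right; right; refine ⟨2, 2, fun v => ?_⟩; ring1)
      | (right; right; refine ⟨2, 3, fun v => ?_⟩; ring1)
      | (right; right; refine ⟨3, 3, fun v => ?_⟩; ring1)

/-! ### The two primitive cube roots of unity -/

def w1 : ℂ := Complex.exp (2 * Real.pi * Complex.I / 3)
def w2 : ℂ := Complex.exp (4 * Real.pi * Complex.I / 3)

lemma arg1 : (2 * (Real.pi:ℂ) * Complex.I / 3) = ((2*Real.pi/3 : ℝ):ℂ) * Complex.I := by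
  push_cast; ring

lemma arg2 : (4 * (Real.pi:ℂ) * Complex.I / 3) = ((4*Real.pi/3 : ℝ):ℂ) * Complex.I := by
  push_cast; ring

lemma w1_re : w1.re = -(1/2) := by
  rw [w1, arg1, Complex.exp_ofReal_mul_I_re,
    show (2*Real.pi/3 : ℝ) = Real.pi - Real.pi/3 by ring,
    Real.cos_pi_sub, Real.cos_pi_div_three]

lemma w1_im : w1.im = Real.sqrt 3 / 2 := by
  rw [w1, arg1, Complex.exp_ofReal_mul_I_im,
    show (2*Real.pi/3 : ℝ) = Real.pi - Real.pi/3 by ring,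
    Real.sin_pi_sub, Real.sin_pi_div_three]

lemma w2_re : w2.re = -(1/2) := by
  rw [w2, arg2, Complex.exp_ofReal_mul_I_re,
    show (4*Real.pi/3 : ℝ) = Real.pi + Real.pi/3 by ring, Real.cos_add]
  norm_num [Real.cos_pi, Real.sin_pi, Real.cos_pi_div_three]

lemma w2_im : w2.im = -(Real.sqrt 3 / 2) := by
  rw [w2, arg2, Complex.exp_ofReal_mul_I_im,
    show (4*Real.pi/3 : ℝ) = Real.pi + Real.pi/3 by ring, Real.sin_add]
  norm_num [Real.cos_pi, Real.sin_pi, Real.sin_pi_div_three]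

lemma sqrt3_pos : 0 < Real.sqrt 3 := Real.sqrt_pos.2 (by norm_num)

lemma w1_ne_one : w1 ≠ 1 := by
  intro h
  have h2 := congrArg Complex.im h
  rw [w1_im] at h2
  simp at h2

lemma w2_ne_one : w2 ≠ 1 := by
  intro h
  have h2 := congrArg Complex.im h
  rw [w2_im] at h2
  simp at h2

lemma w1_ne_w2 : w1 ≠ w2 := by
  intro h
  have h2 := congrArg Complex.im h
  rw [w1_im, w2_im] at h2
  have := sqrt3_pos
  linarith

lemma w1_ne_zero : w1 ≠ 0 := Complex.exp_ne_zero _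
lemma w2_ne_zero : w2 ≠ 0 := Complex.exp_ne_zero _

lemma w1_abs : ‖w1‖ = 1 := by
  rw [w1, Complex.norm_exp]
  norm_num

lemma w2_abs : ‖w2‖ = 1 := by
  rw [w2, Complex.norm_exp]
  norm_num

/-! ### The explicit six-point configuration -/

def Xex : Finset (ℂ × ℂ) :=
  {((1:ℂ), (0:ℂ)), (w1, 0), (w2, 0), (0, 1), (0, w1), (0, w2)}

lemma Xex_coe : (↑Xex : Set (ℂ × ℂ)) =
    {((1 : ℂ), (0 : ℂ)),
        (Complex.exp (2 * Real.pi * Complex.I / 3), 0),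
        (Complex.exp (4 * Real.pi * Complex.I / 3), 0),
        (0, 1),
        (0, Complex.exp (2 * Real.pi * Complex.I / 3)),
        (0, Complex.exp (4 * Real.pi * Complex.I / 3))} := by
  simp only [Xex, w1, w2, Finset.coe_insert, Finset.coe_singleton]

lemma Xex_card : Xex.card = 6 := by
  have d1 : (1:ℂ) ≠ w1 := fun h => w1_ne_one h.symm
  have d2 : (1:ℂ) ≠ w2 := fun h => w2_ne_one h.symm
  have d3 : (1:ℂ) ≠ 0 := one_ne_zero
  have d4 : w1 ≠ w2 := w1_ne_w2
  have d5 : w1 ≠ 0 := w1_ne_zero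
  have d6 : w2 ≠ 0 := w2_ne_zero
  rw [Xex]
  rw [Finset.card_insert_of_notMem (by simp [Prod.ext_iff, d1, d2, d3]),
    Finset.card_insert_of_notMem (by simp [Prod.ext_iff, d4, d5]),
    Finset.card_insert_of_notMem (by simp [Prod.ext_iff, d6]),
    Finset.card_insert_of_notMem (by simp [Prod.ext_iff, d1, d2]),
    Finset.card_insert_of_notMem (by simp [Prod.ext_iff, d4]),
    Finset.card_singleton]

lemma Xex_sum (f : ℂ × ℂ → ℂ) :
    ∑ x ∈ Xex, f x
      = f (1, 0) + f (w1, 0) + f (w2, 0) + f (0, 1) + f (0, w1) + f (0, w2) := by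
  have d1 : (1:ℂ) ≠ w1 := fun h => w1_ne_one h.symm
  have d2 : (1:ℂ) ≠ w2 := fun h => w2_ne_one h.symm
  have d3 : (1:ℂ) ≠ 0 := one_ne_zero
  have d4 : w1 ≠ w2 := w1_ne_w2
  have d5 : w1 ≠ 0 := w1_ne_zero
  have d6 : w2 ≠ 0 := w2_ne_zero
  rw [Xex]
  rw [Finset.sum_insert (by simp [Prod.ext_iff, d1, d2, d3]),
    Finset.sum_insert (by simp [Prod.ext_iff, d4, d5]),
    Finset.sum_insert (by simp [Prod.ext_iff, d6]),
    Finset.sum_insert (by simp [Prod.ext_iff, d1, d2]),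
    Finset.sum_insert (by simp [Prod.ext_iff, d4]),
    Finset.sum_singleton]
  ring

end Aux3

section Aux4

lemma dsum_coord (i : Fin 4) : ∑ x ∈ Xex, ((coords4 x i : ℝ) : ℂ) = 0 := by
  rw [Xex_sum]
  fin_cases i <;>
    simp [coords4, w1_re, w1_im, w2_re, w2_im] <;>
    push_cast <;>
    ring

lemma dsum_prod (i j : Fin 4) :
    ∑ x ∈ Xex, ((coords4 x i : ℝ) : ℂ) * ((coords4 x j : ℝ) : ℂ)
      = if i = j then (3/2 : ℂ) else 0 := by
  have h3 : ((Real.sqrt 3 : ℝ) : ℂ) * ((Real.sqrt 3 : ℝ) : ℂ) = 3 := by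
    norm_cast
    exact Real.mul_self_sqrt (by norm_num)
  rw [Xex_sum]
  fin_cases i <;> fin_cases j <;>
    simp [coords4, w1_re, w1_im, w2_re, w2_im] <;>
    push_cast <;>
    first
      | ring1
      | linear_combination h3 / 2
      | linear_combination -h3 / 2
      | linear_combination h3 / 4
      | linear_combination -h3 / 4

lemma cont_ev (q : MvPolynomial (Fin 4) ℂ) :
    Continuous fun x : ℂ × ℂ => MvPolynomial.eval (fun i => ((coords4 x i : ℝ) : ℂ)) q := by
  induction q using MvPolynomial.induction_on with
  | C a => simp only [MvPolynomial.eval_C]; exact continuous_const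
  | add p q hp hq => simp only [map_add]; exact hp.add hq
  | mul_X p i hp =>
      simp only [map_mul, MvPolynomial.eval_X]
      exact hp.mul (Complex.continuous_ofReal.comp (cont_coord i))

lemma muS3_toReal : (μS3 Set.univ).toReal = VS := by rw [muS3_univ]; rfl

lemma VSC_ne : ((VS : ℝ) : ℂ) ≠ 0 := by
  exact_mod_cast VS_pos.ne'

lemma design_mono (m : Fin 4 →₀ ℕ) (hm : (m.sum fun _ e => e) ≤ 2) (a : ℂ) :
    (∑ x ∈ Xex, MvPolynomial.eval (fun i => ((coords4 x i : ℝ) : ℂ))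
        (MvPolynomial.monomial m a)) / 6
      = (μS3 Set.univ).toReal⁻¹ •
        ∫ x, MvPolynomial.eval (fun i => ((coords4 x i : ℝ) : ℂ))
          (MvPolynomial.monomial m a) ∂μS3 := by
  have hm' : m 0 + m 1 + m 2 + m 3 ≤ 2 := by
    rwa [Finsupp.sum_fintype _ _ (fun i => rfl), Fin.sum_univ_four] at hm
  have hev : ∀ v : Fin 4 → ℂ, MvPolynomial.eval v (MvPolynomial.monomial m a)
      = a * (v 0 ^ m 0 * v 1 ^ m 1 * v 2 ^ m 2 * v 3 ^ m 3) := by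
    intro v
    rw [MvPolynomial.eval_monomial, Finsupp.prod_fintype _ _ (fun i => pow_zero _),
      Fin.prod_univ_four]
  have hVne : (VS : ℝ) ≠ 0 := VS_pos.ne'
  rcases classify (m 0) (m 1) (m 2) (m 3) hm' with hc | ⟨i, hc⟩ | ⟨i, j, hc⟩
  · have key : ∀ x : ℂ × ℂ, MvPolynomial.eval (fun i => ((coords4 x i : ℝ) : ℂ))
        (MvPolynomial.monomial m a) = a := by
      intro x
      have hc' : ((coords4 x 0 : ℝ) : ℂ) ^ m 0 * ((coords4 x 1 : ℝ) : ℂ) ^ m 1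
          * ((coords4 x 2 : ℝ) : ℂ) ^ m 2 * ((coords4 x 3 : ℝ) : ℂ) ^ m 3 = 1 := hc (fun k => ((coords4 x k : ℝ) : ℂ))
      rw [hev, hc', mul_one]
    simp only [key]
    rw [Finset.sum_const, Xex_card, integral_const, measureReal_def, muS3_toReal, smul_smul,
      inv_mul_cancel₀ hVne, one_smul, nsmul_eq_mul]
    push_cast
    ring
  · have key : ∀ x : ℂ × ℂ, MvPolynomial.eval (fun i' => ((coords4 x i' : ℝ) : ℂ))
        (MvPolynomial.monomial m a) = a * ((coords4 x i : ℝ) : ℂ) := by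
      intro x
      have hc' : ((coords4 x 0 : ℝ) : ℂ) ^ m 0 * ((coords4 x 1 : ℝ) : ℂ) ^ m 1
          * ((coords4 x 2 : ℝ) : ℂ) ^ m 2 * ((coords4 x 3 : ℝ) : ℂ) ^ m 3
            = ((coords4 x i : ℝ) : ℂ) := hc (fun k => ((coords4 x k : ℝ) : ℂ))
      rw [hev, hc']
    simp only [key]
    rw [← Finset.mul_sum, dsum_coord i, integral_const_mul, int_coord i]
    simp
  · have key : ∀ x : ℂ × ℂ, MvPolynomial.eval (fun i' => ((coords4 x i' : ℝ) : ℂ))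
        (MvPolynomial.monomial m a)
          = a * (((coords4 x i : ℝ) : ℂ) * ((coords4 x j : ℝ) : ℂ)) := by
      intro x
      have hc' : ((coords4 x 0 : ℝ) : ℂ) ^ m 0 * ((coords4 x 1 : ℝ) : ℂ) ^ m 1
          * ((coords4 x 2 : ℝ) : ℂ) ^ m 2 * ((coords4 x 3 : ℝ) : ℂ) ^ m 3
            = ((coords4 x i : ℝ) : ℂ) * ((coords4 x j : ℝ) : ℂ) := hc (fun k => ((coords4 x k : ℝ) : ℂ))
      rw [hev, hc']
    simp only [key]
    rw [← Finset.mul_sum, dsum_prod i j, integral_const_mul, int_prod i j, muS3_toReal]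
    by_cases hij : i = j
    · rw [if_pos hij, if_pos hij, Complex.real_smul]
      push_cast
      field_simp
      linear_combination (-12 * a) * mul_inv_cancel₀ VSC_ne
    · rw [if_neg hij, if_neg hij]
      simp

end Aux4

/-- The explicit 6-point subset of `S³` obtained from the antipodal
1-design on `S²` and the regular 3-gon is a spherical 2-design on `S³`. -/
theorem six_point_two_design (X : Finset (ℂ × ℂ))
    (hX : ↑X = ({((1 : ℂ), (0 : ℂ)),
        (Complex.exp (2 * Real.pi * Complex.I / 3), 0),
        (Complex.exp (4 * Real.pi * Complex.I / 3), 0),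
        (0, 1),
        (0, Complex.exp (2 * Real.pi * Complex.I / 3)),
        (0, Complex.exp (4 * Real.pi * Complex.I / 3))} : Set (ℂ × ℂ))) :
    ↑X ⊆ S3 ∧ IsDesign coords4 μS3 2 X := by
  have hXeq : X = Xex := Finset.coe_injective (by rw [hX, Xex_coe])
  subst hXeq
  constructor
  · intro p hp
    rw [Xex_coe] at hp
    simp only [Set.mem_insert_iff, Set.mem_singleton_iff] at hp
    rcases hp with rfl|rfl|rfl|rfl|rfl|rfl <;>
      simp [S3,
        show ‖(Complex.exp (2 * Real.pi * Complex.I / 3))‖ = 1 from w1_abs,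
        show ‖(Complex.exp (4 * Real.pi * Complex.I / 3))‖ = 1 from w2_abs]
  · refine ⟨⟨((1:ℂ), (0:ℂ)), by simp [Xex]⟩, ?_⟩
    intro p hdeg
    rw [Xex_card]
    push_cast
    obtain ⟨S, cf, hS, rfl⟩ : ∃ (S : Finset (Fin 4 →₀ ℕ)) (cf : (Fin 4 →₀ ℕ) → ℂ),
        (∀ m ∈ S, (m.sum fun _ e => e) ≤ 2) ∧
          p = ∑ m ∈ S, MvPolynomial.monomial m (cf m) :=
      ⟨p.support, fun m => MvPolynomial.coeff m p,
        fun m hm => le_trans (MvPolynomial.le_totalDegree hm) hdeg, p.as_sum⟩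
    simp only [map_sum]
    rw [Finset.sum_comm, average_eq,
      integral_finset_sum _ (fun m _ => integrable_muS3 _ (cont_ev _)),
      Finset.smul_sum, Finset.sum_div]
    exact Finset.sum_congr rfl fun m hm => design_mono m (hS m hm) (cf m)

end
end

section
/- With the hypotheses of the weighted lifting lemma applied to every f in a finite-dimensional space 𝓗 of integrable functions on Ω₁ all satisfying the Fubini property: if (Y,λ_Y) is a weighted (I_π 𝓗)-design on (Ω₂,μ₂) and each (Γ_y, λ_{Γ_y}) is a weighted 𝓗|_{π⁻¹(y)}-design on (π⁻¹(y),μ_y), then (X, λ_X) with X = ⊔_y Γ_y, λ_X(x) = λ_Y(y)λ_{Γ_y}(x), is a weighted 𝓗-design on (Ω₁,μ₁). -/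
open MeasureTheory


/-- weighted lifting for a finite-dimensional space `𝓗` of functions.
If every `f ∈ 𝓗` satisfies the Fubini property, `(Y, lY)` is a weighted `I_π 𝓗`-design on
`(Ω₂, μ₂)` and each `(Γ y, lΓ y)` is a weighted `𝓗|_{π⁻¹(y)}`-design on the fiber, then
`(X, lX)` with `X = ⊔_y Γ y`, `lX x = lY y · lΓ y x`, is a weighted `𝓗`-design on
`(Ω₁, μ₁)`. -/
theorem weighted_lift_space {Ω₁ Ω₂ : Type*} [MeasurableSpace Ω₁] [MeasurableSpace Ω₂]
    [DecidableEq Ω₁]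
    (μ₁ : Measure Ω₁) (μ₂ : Measure Ω₂) [IsFiniteMeasure μ₁] [IsFiniteMeasure μ₂]
    (π : Ω₁ → Ω₂) (μf : Ω₂ → Measure Ω₁)
    (hμfsupp : ∀ ω, μf ω ((π ⁻¹' {ω})ᶜ) = 0)
    (H : Submodule ℂ (Ω₁ → ℂ)) [FiniteDimensional ℂ H]
    (hint : ∀ f ∈ H, Integrable f μ₁)
    (hfib : ∀ f ∈ H, ∀ ω, Integrable f (μf ω))
    (hIπint : ∀ f ∈ H, Integrable (fun ω => ∫ x, f x ∂(μf ω)) μ₂)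
    (hFubini : ∀ f ∈ H, ∫ x, f x ∂μ₁ = ∫ ω, ∫ x, f x ∂(μf ω) ∂μ₂)
    (Y : Finset Ω₂) (lY : Ω₂ → ℝ) (hlY : ∀ y ∈ Y, 0 < lY y)
    (hYdes : ∀ f ∈ H, ∑ y ∈ Y, (lY y : ℂ) * ∫ x, f x ∂(μf y) =
      ∫ ω, ∫ x, f x ∂(μf ω) ∂μ₂)
    (Γ : Ω₂ → Finset Ω₁) (hΓfib : ∀ y ∈ Y, ↑(Γ y) ⊆ π ⁻¹' {y})
    (lΓ : Ω₂ → Ω₁ → ℝ) (hlΓ : ∀ y ∈ Y, ∀ x ∈ Γ y, 0 < lΓ y x)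
    (hΓdes : ∀ f ∈ H, ∀ y ∈ Y, ∑ x ∈ Γ y, (lΓ y x : ℂ) * f x = ∫ x, f x ∂(μf y))
    (X : Finset Ω₁) (hX : X = Y.biUnion Γ)
    (lX : Ω₁ → ℝ) (hlX : ∀ y ∈ Y, ∀ x ∈ Γ y, lX x = lY y * lΓ y x) :
    ∀ f ∈ H, ∑ x ∈ X, (lX x : ℂ) * f x = ∫ x, f x ∂μ₁ := by
  intro f hf
  have hdisj : ∀ y₁ ∈ Y, ∀ y₂ ∈ Y, y₁ ≠ y₂ → Disjoint (Γ y₁) (Γ y₂) := by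
    intro y₁ h₁ y₂ h₂ hne
    rw [Finset.disjoint_left]
    intro x hx₁ hx₂
    exact hne ((hΓfib y₁ h₁ hx₁).symm.trans (hΓfib y₂ h₂ hx₂))
  rw [hX, Finset.sum_biUnion hdisj, hFubini f hf, ← hYdes f hf]
  refine Finset.sum_congr rfl fun y hy => ?_
  rw [← hΓdes f hf y hy, Finset.mul_sum]
  refine Finset.sum_congr rfl fun x hx => ?_
  rw [hlX y hy x hx]
  push_cast
  ring
end

section
/- For y = (ξ,η) ∈ S² with ξ ≠ −1, the fiber of the Hopf map is π⁻¹(y) = { (√((1+ξ)/2) · z, (1/√(2(1+ξ))) · η z̄ ) : z ∈ S¹ }. -/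
open MeasureTheory Complex

noncomputable section

/-- For `y = (ξ,η) ∈ S²` with `ξ ≠ −1`, the fiber of the Hopf map is
`π⁻¹(y) = {(√((1+ξ)/2)·z, (1/√(2(1+ξ)))·η z̄) : z ∈ S¹}`. -/
theorem hopf_fiber_plus (ξ : ℝ) (η : ℂ) (hy : (ξ, η) ∈ S2) (hξ : ξ ≠ -1) :
    {p ∈ S3 | hopf p = (ξ, η)} =
      (fun z : ℂ => (((Real.sqrt ((1 + ξ) / 2) : ℝ) : ℂ) * z,
        (((Real.sqrt (2 * (1 + ξ)) : ℝ) : ℂ))⁻¹ * η * starRingEnd ℂ z)) '' S1 := by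
  have h1 : ξ ^ 2 + ‖η‖ ^ 2 = 1 := hy
  have hξ1 : 0 < 1 + ξ := by
    have h2 : -1 ≤ ξ := by nlinarith [sq_nonneg (‖η‖)]
    rcases lt_or_eq_of_le h2 with h | h
    · linarith
    · exact absurd h.symm hξ
  set s : ℝ := Real.sqrt ((1 + ξ) / 2) with hs_def
  have hs_pos : 0 < s := Real.sqrt_pos.mpr (by linarith)
  have hs2 : s ^ 2 = (1 + ξ) / 2 := Real.sq_sqrt (by linarith)
  have ht : Real.sqrt (2 * (1 + ξ)) = 2 * s := by
    rw [show 2 * (1 + ξ) = (2 * s) ^ 2 by nlinarith, Real.sqrt_sq (by linarith)]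
  have hsC : ((s : ℝ) : ℂ) ≠ 0 := by exact_mod_cast hs_pos.ne'
  have hs2C : ((s : ℝ) : ℂ) * ((s : ℝ) : ℂ) = (((1 + ξ) / 2 : ℝ) : ℂ) := by
    push_cast
    have h : s * s = (1 + ξ) / 2 := by nlinarith
    rw [← Complex.ofReal_mul, h]; push_cast; ring
  ext p
  simp only [Set.mem_setOf_eq, Set.mem_image, S3, S1, hopf, Prod.mk.injEq, ht]
  constructor
  · rintro ⟨hS3, h2, h3⟩
    obtain ⟨a, b⟩ := p
    simp only at hS3 h2 h3 ⊢
    have ha2 : ‖a‖ ^ 2 = (1 + ξ) / 2 := by linarith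
    have habs : ‖a‖ = s := by
      rw [hs_def, ← ha2, Real.sqrt_sq (norm_nonneg a)]
    have ha0 : a ≠ 0 := by
      intro h; rw [h] at habs; simp at habs; linarith
    refine ⟨a / (s : ℂ), ?_, ?_⟩
    · simp [map_div₀, norm_div, habs, Complex.norm_real, abs_of_pos hs_pos,
        div_self hs_pos.ne']
    rw [Prod.mk.injEq]
    refine ⟨by field_simp, ?_⟩
    · have hac : a * starRingEnd ℂ a = (((1 + ξ) / 2 : ℝ) : ℂ) := by
        rw [Complex.mul_conj, show Complex.normSq a = (1 + ξ) / 2 by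
          rw [← Complex.sq_norm, ha2]]
      rw [map_div₀]
      simp only [Complex.conj_ofReal]
      rw [← h3]
      push_cast
      field_simp
      linear_combination b * hac - b * hs2C
  · rintro ⟨z, hz, hp⟩
    have hzz : z * starRingEnd ℂ z = 1 := by
      rw [Complex.mul_conj]
      rw [← Complex.sq_norm] at *
      simp [hz]
    have habsz : ‖z‖ = 1 := hz
    subst hp
    have hη2 : ‖η‖ ^ 2 = 1 - ξ ^ 2 := by linarith
    have habs1 : ‖((s : ℝ) : ℂ) * z‖ = s := by
      simp [map_mul, norm_mul, habsz, Complex.norm_real, abs_of_pos hs_pos]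
    have habs2 : ‖(((2 * s : ℝ) : ℂ))⁻¹ * η * starRingEnd ℂ z‖
        = ‖η‖ / (2 * s) := by
      simp [map_mul, map_inv₀, norm_mul, norm_inv, habsz, Complex.norm_real,
        abs_of_pos (by linarith : (0:ℝ) < 2 * s), abs_of_pos hs_pos]
      ring
    refine ⟨?_, ?_, ?_⟩
    · simp only [habs1, habs2]
      rw [div_pow]
      field_simp
      nlinarith [norm_nonneg η]
    · simp only [habs1, habs2]
      rw [div_pow]
      field_simp
      nlinarith [norm_nonneg η]
    · push_cast
      field_simp
      linear_combination η * hzz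

end
end

section
/- For any y ∈ S² with base point s_y ∈ π⁻¹(y) and ι_y : S¹ → π⁻¹(y), z ↦ s_y·z, the pullback under ι_y of the restrictions to π⁻¹(y) of polynomials of degree ≤ t on ℝ⁴ ≅ ℂ² equals the space of restrictions to S¹ of polynomials of degree ≤ t on ℝ² ≅ ℂ: ι_y^*(P_t(S³)|_{π⁻¹(y)}) = P_t(S¹). -/
open MeasureTheory Complex

noncomputable section

open MvPolynomial

lemma aux_td {σ : Type*} (a b : ℂ) (i j : σ) :
    (C a * X i + C b * X j : MvPolynomial σ ℂ).totalDegree ≤ 1 := by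
  refine (totalDegree_add _ _).trans (max_le ?_ ?_) <;>
    refine (totalDegree_mul _ _).trans ?_ <;>
      simp [totalDegree_C, totalDegree_X]

lemma aux_subst_td {σ τ : Type*} (L : σ → MvPolynomial τ ℂ)
    (hL : ∀ i, (L i).totalDegree ≤ 1) (p : MvPolynomial σ ℂ) :
    (eval₂ C L p).totalDegree ≤ p.totalDegree := by
  rw [eval₂_eq]
  apply totalDegree_finsetSum_le
  intro d hd
  refine (totalDegree_mul _ _).trans ?_
  rw [totalDegree_C, zero_add]
  refine (totalDegree_finset_prod _ _).trans ?_
  calc ∑ i ∈ d.support, (L i ^ d i).totalDegree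
      ≤ ∑ i ∈ d.support, d i := by
        refine Finset.sum_le_sum fun i _ => (totalDegree_pow _ _).trans ?_
        calc d i * (L i).totalDegree ≤ d i * 1 := Nat.mul_le_mul_left _ (hL i)
        _ = d i := Nat.mul_one _
    _ ≤ p.totalDegree := le_totalDegree hd

lemma aux_eval {σ τ : Type*} (L : σ → MvPolynomial τ ℂ) (v : τ → ℂ) (p : MvPolynomial σ ℂ) :
    eval v (eval₂ C L p) = eval (fun i => eval v (L i)) p := by
  rw [eval_eval₂]
  have h : ((eval v).comp (C : ℂ →+* MvPolynomial τ ℂ)) = RingHom.id ℂ := by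
    ext a; simp
  rw [h, eval₂_id]

set_option maxHeartbeats 1000000 in
/-- For `y ∈ S²` with base point `s ∈ π⁻¹(y)` and `ι_y : z ↦ s·z`, the
pullback under `ι_y` of restrictions to the fiber of polynomials of degree ≤ t on
`ℝ⁴ ≅ ℂ²` equals the restrictions to `S¹` of polynomials of degree ≤ t on `ℝ² ≅ ℂ`:
`ι_y^*(P_t(S³)|_{π⁻¹(y)}) = P_t(S¹)`. -/
theorem pullback_fiber_polynomials (t : ℕ) (s : ℂ × ℂ) (hs : s ∈ S3) :
    {g : ↥S1 → ℂ | ∃ p : MvPolynomial (Fin 4) ℂ, p.totalDegree ≤ t ∧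
        ∀ z : ↥S1, g z = polyFun4 p (act s z.1)} =
    {g : ↥S1 → ℂ | ∃ q : MvPolynomial (Fin 2) ℂ, q.totalDegree ≤ t ∧
        ∀ z : ↥S1, g z = polyFun2 q z.1} := by
  ext g
  simp only [Set.mem_setOf_eq]
  constructor
  · rintro ⟨p, hp, hg⟩
    set L : Fin 4 → MvPolynomial (Fin 2) ℂ :=
      ![C (s.1.re : ℂ) * X 0 + C (-s.1.im : ℂ) * X 1,
        C (s.1.im : ℂ) * X 0 + C (s.1.re : ℂ) * X 1,
        C (s.2.re : ℂ) * X 0 + C (s.2.im : ℂ) * X 1,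
        C (s.2.im : ℂ) * X 0 + C (-s.2.re : ℂ) * X 1] with hL
    have hLd : ∀ i, (L i).totalDegree ≤ 1 := by
      intro i; fin_cases i <;> exact aux_td _ _ _ _
    refine ⟨eval₂ C L p, (aux_subst_td L hLd p).trans hp, fun z => ?_⟩
    rw [hg z]
    unfold polyFun2 polyFun4
    rw [aux_eval]
    have hv : (fun i => ((coords4 (act s z.1) i : ℝ) : ℂ)) =
        fun i => eval (fun j => ((coords2 z.1 j : ℝ) : ℂ)) (L i) := by
      funext i
      fin_cases i <;>
        simp [hL, coords4, coords2, act, Complex.mul_re, Complex.mul_im] <;> push_cast <;> ring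
    rw [hv]
  · rintro ⟨q, hq, hg⟩
    have hcase : s.1 ≠ 0 ∨ s.2 ≠ 0 := by
      by_contra h
      push_neg at h
      simp only [S3, Set.mem_setOf_eq, h.1, h.2, map_zero] at hs
      norm_num at hs
    rcases hcase with h1 | h2
    · set n : ℝ := s.1.re ^ 2 + s.1.im ^ 2 with hn
      have hn0 : n ≠ 0 := by
        intro h
        apply h1
        have hre : s.1.re = 0 ∧ s.1.im = 0 := by
          constructor <;> nlinarith [sq_nonneg s.1.re, sq_nonneg s.1.im]
        exact Complex.ext hre.1 hre.2
      have hnC : (n : ℂ) ≠ 0 := Complex.ofReal_ne_zero.mpr hn0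
      set M : Fin 2 → MvPolynomial (Fin 4) ℂ :=
        ![C ((s.1.re / n : ℝ) : ℂ) * X 0 + C ((s.1.im / n : ℝ) : ℂ) * X 1,
          C ((-s.1.im / n : ℝ) : ℂ) * X 0 + C ((s.1.re / n : ℝ) : ℂ) * X 1] with hM
      have hMd : ∀ i, (M i).totalDegree ≤ 1 := by
        intro i; fin_cases i <;> exact aux_td _ _ _ _
      refine ⟨eval₂ C M q, (aux_subst_td M hMd q).trans hq, fun z => ?_⟩
      rw [hg z]
      unfold polyFun2 polyFun4
      rw [aux_eval]
      have hv : (fun i => ((coords2 z.1 i : ℝ) : ℂ)) =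
          fun i => eval (fun j => ((coords4 (act s z.1) j : ℝ) : ℂ)) (M i) := by
        funext i
        fin_cases i <;>
          · simp [hM, coords4, coords2, act, Complex.mul_re, Complex.mul_im]
            push_cast
            field_simp
            rw [hn]
            push_cast
            ring
      rw [hv]
    · set n : ℝ := s.2.re ^ 2 + s.2.im ^ 2 with hn
      have hn0 : n ≠ 0 := by
        intro h
        apply h2
        have hre : s.2.re = 0 ∧ s.2.im = 0 := by
          constructor <;> nlinarith [sq_nonneg s.2.re, sq_nonneg s.2.im]
        exact Complex.ext hre.1 hre.2
      have hnC : (n : ℂ) ≠ 0 := Complex.ofReal_ne_zero.mpr hn0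
      set M : Fin 2 → MvPolynomial (Fin 4) ℂ :=
        ![C ((s.2.re / n : ℝ) : ℂ) * X 2 + C ((s.2.im / n : ℝ) : ℂ) * X 3,
          C ((s.2.im / n : ℝ) : ℂ) * X 2 + C ((-s.2.re / n : ℝ) : ℂ) * X 3] with hM
      have hMd : ∀ i, (M i).totalDegree ≤ 1 := by
        intro i; fin_cases i <;> exact aux_td _ _ _ _
      refine ⟨eval₂ C M q, (aux_subst_td M hMd q).trans hq, fun z => ?_⟩
      rw [hg z]
      unfold polyFun2 polyFun4
      rw [aux_eval]
      have hv : (fun i => ((coords2 z.1 i : ℝ) : ℂ)) =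
          fun i => eval (fun j => ((coords4 (act s z.1) j : ℝ) : ℂ)) (M i) := by
        funext i
        fin_cases i <;>
          · simp [hM, coords4, coords2, act, Complex.mul_re, Complex.mul_im]
            push_cast
            field_simp
            rw [hn]
            push_cast
            ring
      rw [hv]

end
end

section
/- For the Hopf map π : S³ → S² with fiberwise S¹-invariant probability measures, the fiber-integration operator I_π maps P_t(S³) onto P_{⌊t/2⌋}(S²): I_π(P_t(S³)) = P_{⌊t/2⌋}(S²). -/
open MeasureTheory Complex

noncomputable section

open MvPolynomial
open scoped Pointwise

lemma aux_eval_aeval {n m : ℕ} (h : Fin m → ℂ) (g : Fin n → MvPolynomial (Fin m) ℂ)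
    (p : MvPolynomial (Fin n) ℂ) :
    eval h (aeval g p) = eval (fun i => eval h (g i)) p := by
  induction p using MvPolynomial.induction_on with
  | C a => simp
  | add p q hp hq => simp only [map_add, hp, hq]
  | mul_X p i hp => simp only [map_mul, aeval_X, eval_X, hp]

lemma aux_totalDegree_aeval_le {n m k : ℕ} (g : Fin n → MvPolynomial (Fin m) ℂ)
    (hg : ∀ i, (g i).totalDegree ≤ k) (p : MvPolynomial (Fin n) ℂ) :
    (aeval g p).totalDegree ≤ k * p.totalDegree := by
  rw [aeval_def, MvPolynomial.algebraMap_eq, eval₂_eq']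
  refine totalDegree_finsetSum_le fun d hd => ?_
  refine (totalDegree_mul _ _).trans ?_
  rw [totalDegree_C, zero_add]
  refine (totalDegree_finset_prod _ _).trans ?_
  calc ∑ i, (g i ^ d i).totalDegree ≤ ∑ i, d i * k := Finset.sum_le_sum fun i _ =>
        (totalDegree_pow _ _).trans (Nat.mul_le_mul_left _ (hg i))
    _ = (∑ i, d i) * k := (Finset.sum_mul _ _ _).symm
    _ ≤ p.totalDegree * k := Nat.mul_le_mul_right _ (by
        rw [show (∑ i, d i) = d.sum (fun _ e => e) from (Finsupp.sum_fintype d (fun _ e => e) (fun _ => rfl)).symm]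
        exact le_totalDegree hd)
    _ = k * p.totalDegree := Nat.mul_comm _ _

lemma td_CX {n : ℕ} (c : ℂ) (i : Fin n) :
    ((C c * X i : MvPolynomial (Fin n) ℂ)).totalDegree ≤ 1 :=
  (totalDegree_mul _ _).trans (by simp [totalDegree_C, totalDegree_X])

lemma td_lin {n : ℕ} (c c' : ℂ) (i : Fin n) :
    ((C c + C c' * X i : MvPolynomial (Fin n) ℂ)).totalDegree ≤ 1 :=
  (totalDegree_add _ _).trans (max_le (by simp [totalDegree_C]) (td_CX c' i))

lemma td_pow_le {n : ℕ} {f : MvPolynomial (Fin n) ℂ} (hf : f.totalDegree ≤ 1) (k : ℕ) :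
    (f ^ k).totalDegree ≤ k :=
  (totalDegree_pow _ _).trans (by
    calc k * f.totalDegree ≤ k * 1 := Nat.mul_le_mul_left _ hf
      _ = k := Nat.mul_one k)

-- measure lemmas

lemma muS1_univ_ne_zero : μS1 Set.univ ≠ 0 := by
  rw [μS1, Measure.map_apply measurable_subtype_coe MeasurableSet.univ, Set.preimage_univ,
    Measure.toSphere_apply_univ]
  refine mul_ne_zero (by simp [Complex.finrank_real_complex]) ?_
  exact (Metric.measure_ball_pos volume 0 one_pos).ne'

lemma muS1_univ_ne_top : μS1 Set.univ ≠ ⊤ := by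
  rw [μS1, Measure.map_apply measurable_subtype_coe MeasurableSet.univ, Set.preimage_univ,
    Measure.toSphere_apply_univ]
  exact ENNReal.mul_ne_top (by simp) measure_ball_lt_top.ne

instance nu_prob : IsProbabilityMeasure (mnormalize μS1) := by
  constructor
  rw [mnormalize, Measure.smul_apply, smul_eq_mul,
    ENNReal.inv_mul_cancel muS1_univ_ne_zero muS1_univ_ne_top]

lemma muS1_ae : ∀ᵐ z ∂μS1, ‖z‖ = 1 := by
  rw [ae_iff]
  have hN : MeasurableSet {z : ℂ | ‖z‖ = 1} := by
    have : {z : ℂ | ‖z‖ = 1} = (fun z : ℂ => ‖z‖) ⁻¹' {1} := rfl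
    rw [this]; exact continuous_norm.measurable (measurableSet_singleton _)
  have hN' : MeasurableSet {z : ℂ | ¬ ‖z‖ = 1} := by
    have := hN.compl
    rwa [Set.compl_setOf] at this
  rw [μS1, Measure.map_apply measurable_subtype_coe hN']
  have hpre : ((fun z : Metric.sphere (0:ℂ) 1 => (z.1 : ℂ)) ⁻¹'
      {z : ℂ | ¬ ‖z‖ = 1}) = ∅ := by
    ext z
    have h1 : ‖z.1‖ = 1 := by
      exact mem_sphere_zero_iff_norm.1 z.2
    simp [h1]
  rw [hpre, measure_empty]

lemma nu_ae : ∀ᵐ z ∂(mnormalize μS1), ‖z‖ = 1 := by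
  rw [mnormalize]
  exact Measure.ae_smul_measure muS1_ae _

lemma toSphere_rot (w : Circle) :
    Measure.map (fun z : Metric.sphere (0:ℂ) 1 =>
        (⟨(w : ℂ) * z.1, by
          have hz := mem_sphere_zero_iff_norm.1 z.2
          simp [mem_sphere_zero_iff_norm, norm_mul, hz, Circle.norm_coe]⟩ : Metric.sphere (0:ℂ) 1))
      (volume : Measure ℂ).toSphere = (volume : Measure ℂ).toSphere := by
  have hw0 : (w : ℂ) ≠ 0 := Circle.coe_ne_zero w
  set g : Metric.sphere (0:ℂ) 1 → Metric.sphere (0:ℂ) 1 := fun z =>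
    ⟨(w : ℂ) * z.1, by
      have hz := mem_sphere_zero_iff_norm.1 z.2
      simp [mem_sphere_zero_iff_norm, norm_mul, hz, Circle.norm_coe]⟩ with hg
  have hgm : Measurable g :=
    Measurable.subtype_mk ((continuous_const.mul continuous_subtype_val).measurable)
  ext st hst
  rw [Measure.map_apply hgm hst, Measure.toSphere_apply' _ (hgm hst),
    Measure.toSphere_apply' _ hst]
  have hset : (Subtype.val '' (g ⁻¹' st)) = (fun z : ℂ => (w : ℂ)⁻¹ * z) '' (Subtype.val '' st) := by
    ext x
    constructor
    · rintro ⟨u, hu, rfl⟩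
      exact ⟨(w : ℂ) * u.1, ⟨g u, hu, rfl⟩, by field_simp⟩
    · rintro ⟨v, ⟨u, hu, rfl⟩, rfl⟩
      refine ⟨⟨(w : ℂ)⁻¹ * u.1, ?_⟩, ?_, rfl⟩
      · have hz := mem_sphere_zero_iff_norm.1 u.2
        simp [mem_sphere_zero_iff_norm, norm_mul, norm_inv, hz, Circle.norm_coe]
      · have : g ⟨(w : ℂ)⁻¹ * u.1, by
            have hz := mem_sphere_zero_iff_norm.1 u.2
            simp [mem_sphere_zero_iff_norm, norm_mul, norm_inv, hz, Circle.norm_coe]⟩ = u := by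
          apply Subtype.ext
          show (w : ℂ) * ((w : ℂ)⁻¹ * u.1) = u.1
          field_simp
        rw [Set.mem_preimage, this]
        exact hu
  rw [hset]
  have hsmul : Set.Ioo (0:ℝ) 1 • ((fun z : ℂ => (w : ℂ)⁻¹ * z) '' (Subtype.val '' st))
      = (fun z : ℂ => (w : ℂ)⁻¹ * z) '' (Set.Ioo (0:ℝ) 1 • (Subtype.val '' st)) := by
    ext x
    constructor
    · rintro ⟨r, hr, y, ⟨v, hv, rfl⟩, rfl⟩
      refine ⟨r • v, ⟨r, hr, v, hv, rfl⟩, ?_⟩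
      simp only [Complex.real_smul]; ring
    · rintro ⟨y, ⟨r, hr, v, hv, rfl⟩, rfl⟩
      refine ⟨r, hr, (w : ℂ)⁻¹ * v, ⟨v, hv, rfl⟩, ?_⟩
      simp only [Complex.real_smul]; ring
  rw [hsmul]
  congr 1
  set B : Set ℂ := Set.Ioo (0:ℝ) 1 • (Subtype.val '' st) with hB
  have h2 : (fun z : ℂ => (w : ℂ)⁻¹ * z) '' B
      = (rotation w⁻¹).toHomeomorph.toMeasurableEquiv '' B := by
    apply Set.image_congr'
    intro z
    show (w : ℂ)⁻¹ * z = rotation w⁻¹ z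
    rw [rotation_apply, Circle.coe_inv]
  rw [h2, MeasurableEquiv.image_eq_preimage_symm]
  exact ((rotation w⁻¹).symm.measurePreserving).measure_preimage_emb
    ((rotation w⁻¹).symm.toHomeomorph.toMeasurableEquiv.measurableEmbedding) _

lemma muS1_map_mul {w : ℂ} (hw : ‖w‖ = 1) :
    μS1.map (fun z => w * z) = μS1 := by
  have hwmem : w ∈ Submonoid.unitSphere ℂ := by
    simp [Submonoid.unitSphere, mem_sphere_zero_iff_norm, hw]
  set c : Circle := ⟨w, hwmem⟩ with hc
  have hcont : Measurable fun z : ℂ => w * z := (continuous_const.mul continuous_id).measurable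
  rw [μS1, Measure.map_map hcont measurable_subtype_coe]
  have hcomp : ((fun z : ℂ => w * z) ∘ fun z : Metric.sphere (0:ℂ) 1 => (z.1 : ℂ))
      = (fun z : Metric.sphere (0:ℂ) 1 => (z.1 : ℂ)) ∘ (fun z : Metric.sphere (0:ℂ) 1 =>
        (⟨(c : ℂ) * z.1, by
          have hz := mem_sphere_zero_iff_norm.1 z.2
          simp [mem_sphere_zero_iff_norm, norm_mul, hz, Circle.norm_coe]⟩ :
            Metric.sphere (0:ℂ) 1)) := rfl
  rw [hcomp, ← Measure.map_map measurable_subtype_coe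
    (Measurable.subtype_mk (f := fun z : Metric.sphere (0:ℂ) 1 => (c : ℂ) * z.1)
      ((continuous_const.mul continuous_subtype_val).measurable)),
    toSphere_rot c]

lemma nu_map_mul {w : ℂ} (hw : ‖w‖ = 1) :
    (mnormalize μS1).map (fun z => w * z) = mnormalize μS1 := by
  rw [mnormalize, Measure.map_smul, muS1_map_mul hw]

lemma integrable_moment (i j : ℕ) :
    Integrable (fun z : ℂ => z ^ i * (starRingEnd ℂ z) ^ j) (mnormalize μS1) := by
  have hcont : Continuous fun z : ℂ => z ^ i * (starRingEnd ℂ z) ^ j :=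
    (continuous_pow i).mul ((Complex.continuous_conj).pow j)
  refine Integrable.mono' (integrable_const 1) hcont.aestronglyMeasurable ?_
  filter_upwards [nu_ae] with z hz
  simp only [norm_mul, norm_pow, Complex.norm_conj, hz]
  simp

lemma circle_moment (i j : ℕ) :
    ∫ z, z ^ i * (starRingEnd ℂ z) ^ j ∂(mnormalize μS1) = if i = j then 1 else 0 := by
  by_cases h : i = j
  · subst h
    rw [if_pos rfl]
    have heq : ∀ᵐ z ∂(mnormalize μS1), z ^ i * (starRingEnd ℂ z) ^ i = 1 := by
      filter_upwards [nu_ae] with z hz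
      rw [← mul_pow, Complex.mul_conj, Complex.normSq_eq_norm_sq, hz]
      norm_num
    rw [integral_congr_ae heq]
    simp
  · rw [if_neg h]
    obtain ⟨θ, hθpos, hπ⟩ : ∃ θ : ℝ, 0 < θ ∧ ((i : ℝ) + (j : ℝ) + 1) * θ = Real.pi :=
      ⟨Real.pi / ((i : ℝ) + (j : ℝ) + 1), div_pos Real.pi_pos (by positivity), by field_simp⟩
    set w : ℂ := Complex.exp (θ * Complex.I) with hwdef
    have hw : ‖w‖ = 1 := Complex.norm_exp_ofReal_mul_I θ
    have hmap := nu_map_mul hw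
    set J := ∫ z, z ^ i * (starRingEnd ℂ z) ^ j ∂(mnormalize μS1) with hJ
    have hcont : Continuous fun z : ℂ => z ^ i * (starRingEnd ℂ z) ^ j :=
      (continuous_pow i).mul ((Complex.continuous_conj).pow j)
    have key : J = (w ^ i * (starRingEnd ℂ w) ^ j) * J := by
      calc J = ∫ z, ((w * z) ^ i * (starRingEnd ℂ (w * z)) ^ j) ∂(mnormalize μS1) := by
            rw [hJ]
            conv_lhs => rw [← hmap]
            exact integral_map ((continuous_const.mul continuous_id).aemeasurable)
              hcont.aestronglyMeasurable
        _ = ∫ z, (w ^ i * (starRingEnd ℂ w) ^ j) * (z ^ i * (starRingEnd ℂ z) ^ j)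
              ∂(mnormalize μS1) := by
            refine integral_congr_ae (Filter.Eventually.of_forall fun z => ?_)
            simp only [map_mul, mul_pow]
            ring
        _ = (w ^ i * (starRingEnd ℂ w) ^ j) * J := by rw [integral_const_mul, hJ]
    have hc : w ^ i * (starRingEnd ℂ w) ^ j ≠ 1 := by
      have hwi : w ^ i = Complex.exp ((i : ℕ) * ((θ : ℂ) * Complex.I)) := by
        rw [hwdef, Complex.exp_nat_mul]
      have hwc : starRingEnd ℂ w = Complex.exp (-((θ : ℂ) * Complex.I)) := by
        rw [hwdef, ← Complex.exp_conj]
        congr 1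
        simp [map_mul, Complex.conj_I, Complex.conj_ofReal]
      have hwj : (starRingEnd ℂ w) ^ j = Complex.exp ((j : ℕ) * (-((θ : ℂ) * Complex.I))) := by
        rw [hwc, Complex.exp_nat_mul]
      intro hcontra
      rw [hwi, hwj, ← Complex.exp_add, Complex.exp_eq_one_iff] at hcontra
      obtain ⟨n, hn⟩ := hcontra
      have h2 : (((i : ℝ) * θ - (j : ℝ) * θ : ℝ) : ℂ) * Complex.I
          = (((n : ℝ) * (2 * Real.pi) : ℝ) : ℂ) * Complex.I := by
        push_cast
        linear_combination hn
      have hre : (i : ℝ) * θ - (j : ℝ) * θ = (n : ℝ) * (2 * Real.pi) := by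
        have h3 := mul_right_cancel₀ Complex.I_ne_zero h2
        exact_mod_cast h3
      have habs : |(i : ℝ) * θ - (j : ℝ) * θ| < Real.pi := by
        rw [abs_sub_lt_iff]
        constructor <;> nlinarith [Nat.cast_nonneg (α := ℝ) i, Nat.cast_nonneg (α := ℝ) j]
      rcases eq_or_ne n 0 with rfl | hn0
      · simp only [Int.cast_zero, zero_mul] at hre
        have h4 : (i : ℝ) * θ = (j : ℝ) * θ := by linarith
        have h5 : (i : ℝ) = (j : ℝ) := mul_right_cancel₀ hθpos.ne' h4
        exact h (Nat.cast_injective h5)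
      · have h1 : (1 : ℝ) ≤ |(n : ℝ)| := by exact_mod_cast Int.one_le_abs hn0
        rw [hre, abs_mul, abs_of_pos (by positivity : (0:ℝ) < 2 * Real.pi)] at habs
        nlinarith [Real.pi_pos]
    have h0 : (1 - w ^ i * (starRingEnd ℂ w) ^ j) * J = 0 := by linear_combination key
    rcases mul_eq_zero.1 h0 with h1 | h1
    · exact absurd (by linear_combination -h1) hc
    · exact h1

-- continuity and measurability

lemma continuous_coord4 (i : Fin 4) : Continuous fun x : ℂ × ℂ => ((coords4 x i : ℝ) : ℂ) := by
  fin_cases i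
  · show Continuous fun x : ℂ × ℂ => ((x.1.re : ℝ) : ℂ); fun_prop
  · show Continuous fun x : ℂ × ℂ => ((x.1.im : ℝ) : ℂ); fun_prop
  · show Continuous fun x : ℂ × ℂ => ((x.2.re : ℝ) : ℂ); fun_prop
  · show Continuous fun x : ℂ × ℂ => ((x.2.im : ℝ) : ℂ); fun_prop

lemma continuous_polyFun4 (p : MvPolynomial (Fin 4) ℂ) : Continuous (polyFun4 p) := by
  unfold polyFun4
  induction p using MvPolynomial.induction_on with
  | C a => simpa using continuous_const
  | add p q hp hq => simp only [map_add]; exact hp.add hq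
  | mul_X p i hp =>
    simp only [map_mul, eval_X]
    exact hp.mul (continuous_coord4 i)

lemma measurable_act (s : ℂ × ℂ) : Measurable (act s) := by
  unfold act
  exact ((continuous_const.mul continuous_id).prodMk
    (continuous_const.mul Complex.continuous_conj)).measurable

lemma hopf_act (s : ℂ × ℂ) {z : ℂ} (hz : ‖z‖ = 1) : hopf (act s z) = hopf s := by
  have h1 : z * starRingEnd ℂ z = 1 := by
    rw [Complex.mul_conj, Complex.normSq_eq_norm_sq, hz]
    norm_num
  unfold hopf act
  refine Prod.ext ?_ ?_
  · simp [map_mul, hz, Complex.norm_conj]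
  · show 2 * (s.1 * z) * (s.2 * starRingEnd ℂ z) = 2 * s.1 * s.2
    linear_combination 2 * s.1 * s.2 * h1

lemma integral_fiber (s : ℂ × ℂ) (f : ℂ × ℂ → ℂ) (hf : Continuous f) :
    ∫ x, f x ∂(μfiber s) = ∫ z, f (act s z) ∂(mnormalize μS1) := by
  rw [μfiber]
  exact integral_map (measurable_act s).aemeasurable hf.aestronglyMeasurable

-- substitutions

def csub4 : Fin 4 → MvPolynomial (Fin 4) ℂ :=
  ![C (1/2) * X 0 + C (1/2) * X 1,
    C (-(Complex.I)/2) * X 0 + C (Complex.I/2) * X 1,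
    C (1/2) * X 2 + C (1/2) * X 3,
    C (-(Complex.I)/2) * X 2 + C (Complex.I/2) * X 3]

lemma csub4_degree (i : Fin 4) : (csub4 i).totalDegree ≤ 1 := by
  fin_cases i
  · show (C (1/2) * X 0 + C (1/2) * X 1 : MvPolynomial (Fin 4) ℂ).totalDegree ≤ 1
    exact (totalDegree_add _ _).trans (max_le (td_CX _ _) (td_CX _ _))
  · show (C (-(Complex.I)/2) * X 0 + C (Complex.I/2) * X 1 :
        MvPolynomial (Fin 4) ℂ).totalDegree ≤ 1
    exact (totalDegree_add _ _).trans (max_le (td_CX _ _) (td_CX _ _))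
  · show (C (1/2) * X 2 + C (1/2) * X 3 : MvPolynomial (Fin 4) ℂ).totalDegree ≤ 1
    exact (totalDegree_add _ _).trans (max_le (td_CX _ _) (td_CX _ _))
  · show (C (-(Complex.I)/2) * X 2 + C (Complex.I/2) * X 3 :
        MvPolynomial (Fin 4) ℂ).totalDegree ≤ 1
    exact (totalDegree_add _ _).trans (max_le (td_CX _ _) (td_CX _ _))

lemma eval_csub4 (x : ℂ × ℂ) (i : Fin 4) :
    eval (![x.1, starRingEnd ℂ x.1, x.2, starRingEnd ℂ x.2] : Fin 4 → ℂ) (csub4 i)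
      = ((coords4 x i : ℝ) : ℂ) := by
  have ha1 := Complex.add_conj x.1
  have ha2 := Complex.add_conj x.2
  have hs1 := Complex.sub_conj x.1
  have hs2 := Complex.sub_conj x.2
  push_cast at ha1 ha2 hs1 hs2
  fin_cases i
  · show eval (![x.1, starRingEnd ℂ x.1, x.2, starRingEnd ℂ x.2] : Fin 4 → ℂ)
        (C (1/2) * X 0 + C (1/2) * X 1) = ((x.1.re : ℝ) : ℂ)
    simp only [map_add, map_mul, eval_C, eval_X, Matrix.cons_val_zero, Matrix.cons_val_one,
      Matrix.head_cons]
    linear_combination (1/2 : ℂ) * ha1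
  · show eval (![x.1, starRingEnd ℂ x.1, x.2, starRingEnd ℂ x.2] : Fin 4 → ℂ)
        (C (-(Complex.I)/2) * X 0 + C (Complex.I/2) * X 1) = ((x.1.im : ℝ) : ℂ)
    simp only [map_add, map_mul, eval_C, eval_X, Matrix.cons_val_zero, Matrix.cons_val_one,
      Matrix.head_cons]
    linear_combination (-Complex.I/2) * hs1 - x.1.im * Complex.I_sq
  · show eval (![x.1, starRingEnd ℂ x.1, x.2, starRingEnd ℂ x.2] : Fin 4 → ℂ)
        (C (1/2) * X 2 + C (1/2) * X 3) = ((x.2.re : ℝ) : ℂ)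
    simp only [map_add, map_mul, eval_C, eval_X, Matrix.cons_val_two, Matrix.tail_cons,
      Matrix.cons_val_three, Matrix.head_cons]
    linear_combination (1/2 : ℂ) * ha2
  · show eval (![x.1, starRingEnd ℂ x.1, x.2, starRingEnd ℂ x.2] : Fin 4 → ℂ)
        (C (-(Complex.I)/2) * X 2 + C (Complex.I/2) * X 3) = ((x.2.im : ℝ) : ℂ)
    simp only [map_add, map_mul, eval_C, eval_X, Matrix.cons_val_two, Matrix.tail_cons,
      Matrix.cons_val_three, Matrix.head_cons]
    linear_combination (-Complex.I/2) * hs2 - x.2.im * Complex.I_sq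

def hsub : Fin 3 → MvPolynomial (Fin 4) ℂ :=
  ![X 0 * X 0 + X 1 * X 1 + C (-1) * (X 2 * X 2) + C (-1) * (X 3 * X 3),
    C 2 * (X 0 * X 2) + C (-2) * (X 1 * X 3),
    C 2 * (X 0 * X 3) + C 2 * (X 1 * X 2)]

lemma td_XX {n : ℕ} (i j : Fin n) : ((X i * X j : MvPolynomial (Fin n) ℂ)).totalDegree ≤ 2 :=
  (totalDegree_mul _ _).trans (by simp [totalDegree_X])

lemma td_CXX {n : ℕ} (c : ℂ) (i j : Fin n) :
    ((C c * (X i * X j) : MvPolynomial (Fin n) ℂ)).totalDegree ≤ 2 :=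
  (totalDegree_mul _ _).trans (by simpa [totalDegree_C] using td_XX i j)

lemma hsub_degree (i : Fin 3) : (hsub i).totalDegree ≤ 2 := by
  fin_cases i
  · show (X 0 * X 0 + X 1 * X 1 + C (-1) * (X 2 * X 2) + C (-1) * (X 3 * X 3) :
        MvPolynomial (Fin 4) ℂ).totalDegree ≤ 2
    exact (totalDegree_add _ _).trans (max_le ((totalDegree_add _ _).trans (max_le
      ((totalDegree_add _ _).trans (max_le (td_XX _ _) (td_XX _ _))) (td_CXX _ _ _)))
      (td_CXX _ _ _))
  · show (C 2 * (X 0 * X 2) + C (-2) * (X 1 * X 3) : MvPolynomial (Fin 4) ℂ).totalDegree ≤ 2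
    exact (totalDegree_add _ _).trans (max_le (td_CXX _ _ _) (td_CXX _ _ _))
  · show (C 2 * (X 0 * X 3) + C 2 * (X 1 * X 2) : MvPolynomial (Fin 4) ℂ).totalDegree ≤ 2
    exact (totalDegree_add _ _).trans (max_le (td_CXX _ _ _) (td_CXX _ _ _))

lemma eval_hsub (x : ℂ × ℂ) (i : Fin 3) :
    eval (fun j => ((coords4 x j : ℝ) : ℂ)) (hsub i) = ((coords3 (hopf x) i : ℝ) : ℂ) := by
  fin_cases i
  · show eval (fun j => ((coords4 x j : ℝ) : ℂ))
        (X 0 * X 0 + X 1 * X 1 + C (-1) * (X 2 * X 2) + C (-1) * (X 3 * X 3))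
        = ((‖x.1‖ ^ 2 - ‖x.2‖ ^ 2 : ℝ) : ℂ)
    simp only [map_add, map_mul, eval_C, eval_X, coords4, Matrix.cons_val_zero,
      Matrix.cons_val_one, Matrix.head_cons, Matrix.cons_val_two, Matrix.tail_cons,
      Matrix.cons_val_three]
    rw [Complex.sq_norm, Complex.sq_norm, Complex.normSq_apply, Complex.normSq_apply]
    push_cast
    ring
  · show eval (fun j => ((coords4 x j : ℝ) : ℂ))
        (C 2 * (X 0 * X 2) + C (-2) * (X 1 * X 3)) = (((2 * x.1 * x.2 : ℂ).re : ℝ) : ℂ)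
    simp only [map_add, map_mul, eval_C, eval_X, coords4, Matrix.cons_val_zero,
      Matrix.cons_val_one, Matrix.head_cons, Matrix.cons_val_two, Matrix.tail_cons,
      Matrix.cons_val_three, Complex.mul_re, Complex.mul_im, Complex.re_ofNat,
      Complex.im_ofNat]
    push_cast
    ring
  · show eval (fun j => ((coords4 x j : ℝ) : ℂ))
        (C 2 * (X 0 * X 3) + C 2 * (X 1 * X 2)) = (((2 * x.1 * x.2 : ℂ).im : ℝ) : ℂ)
    simp only [map_add, map_mul, eval_C, eval_X, coords4, Matrix.cons_val_zero,
      Matrix.cons_val_one, Matrix.head_cons, Matrix.cons_val_two, Matrix.tail_cons,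
      Matrix.cons_val_three, Complex.mul_re, Complex.mul_im, Complex.re_ofNat,
      Complex.im_ofNat]
    push_cast
    ring

def gsub3 : Fin 3 → MvPolynomial (Fin 3) ℂ :=
  ![X 0, C 1 * X 1 + C Complex.I * X 2, C 1 * X 1 + C (-Complex.I) * X 2]

lemma gsub3_degree (i : Fin 3) : (gsub3 i).totalDegree ≤ 1 := by
  fin_cases i
  · show (X 0 : MvPolynomial (Fin 3) ℂ).totalDegree ≤ 1
    exact le_of_eq (totalDegree_X _)
  · show (C 1 * X 1 + C Complex.I * X 2 : MvPolynomial (Fin 3) ℂ).totalDegree ≤ 1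
    exact (totalDegree_add _ _).trans (max_le (td_CX _ _) (td_CX _ _))
  · show (C 1 * X 1 + C (-Complex.I) * X 2 : MvPolynomial (Fin 3) ℂ).totalDegree ≤ 1
    exact (totalDegree_add _ _).trans (max_le (td_CX _ _) (td_CX _ _))

lemma eval_gsub3 (y : ℝ × ℂ) (i : Fin 3) :
    eval (fun j => ((coords3 y j : ℝ) : ℂ)) (gsub3 i)
      = (![(y.1 : ℂ), y.2, starRingEnd ℂ y.2] : Fin 3 → ℂ) i := by
  fin_cases i
  · show eval (fun j => ((coords3 y j : ℝ) : ℂ)) (X 0) = ((y.1 : ℝ) : ℂ)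
    simp only [eval_X]
    rfl
  · show eval (fun j => ((coords3 y j : ℝ) : ℂ)) (C 1 * X 1 + C Complex.I * X 2) = y.2
    simp only [map_add, map_mul, eval_C, eval_X, coords3, Matrix.cons_val_one,
      Matrix.head_cons, Matrix.cons_val_two, Matrix.tail_cons]
    rw [one_mul, mul_comm Complex.I]
    exact Complex.re_add_im y.2
  · show eval (fun j => ((coords3 y j : ℝ) : ℂ)) (C 1 * X 1 + C (-Complex.I) * X 2)
        = starRingEnd ℂ y.2
    simp only [map_add, map_mul, eval_C, eval_X, coords3, Matrix.cons_val_one,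
      Matrix.head_cons, Matrix.cons_val_two, Matrix.tail_cons]
    apply Complex.ext <;> simp

def Rpoly (d : Fin 4 →₀ ℕ) : MvPolynomial (Fin 3) ℂ :=
  (C (1/2) + C (1/2) * X 0) ^ (min (d 0) (d 1)) * (C (1/2) + C (-1/2) * X 0) ^ (min (d 2) (d 3))
    * (C (1/2) * X 1) ^ (d 0 - d 1) * (C (1/2) * X 2) ^ (d 1 - d 0)

lemma Rpoly_degree (d : Fin 4 →₀ ℕ) :
    (Rpoly d).totalDegree ≤ min (d 0) (d 1) + min (d 2) (d 3) + (d 0 - d 1) + (d 1 - d 0) := by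
  refine le_trans (totalDegree_mul _ _) ?_
  refine le_trans (add_le_add (le_trans (totalDegree_mul _ _)
    (add_le_add (le_trans (totalDegree_mul _ _)
      (add_le_add (td_pow_le (td_lin _ _ _) _) (td_pow_le (td_lin _ _ _) _)))
      (td_pow_le (td_CX _ _) _))) (td_pow_le (td_CX _ _) _)) ?_
  exact le_rfl

lemma eval_Rpoly {a b η : ℂ} {ξ : ℝ}
    (h1 : ‖a‖ ^ 2 + ‖b‖ ^ 2 = 1)
    (h2 : ‖a‖ ^ 2 - ‖b‖ ^ 2 = ξ)
    (h3 : 2 * a * b = η)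
    (d : Fin 4 →₀ ℕ) (hd : d 0 + d 3 = d 1 + d 2) :
    eval (![(ξ : ℂ), η, starRingEnd ℂ η] : Fin 3 → ℂ) (Rpoly d)
      = a ^ d 0 * (starRingEnd ℂ a) ^ d 1 * b ^ d 2 * (starRingEnd ℂ b) ^ d 3 := by
  have haa : (1/2 + 1/2 * (ξ : ℂ) : ℂ) = a * starRingEnd ℂ a := by
    rw [Complex.mul_conj, Complex.normSq_eq_norm_sq]
    have hx : ‖a‖ ^ 2 = (1 + ξ)/2 := by linarith
    rw [hx]
    push_cast
    ring
  have hbb : (1/2 + (-1/2) * (ξ : ℂ) : ℂ) = b * starRingEnd ℂ b := by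
    rw [Complex.mul_conj, Complex.normSq_eq_norm_sq]
    have hx : ‖b‖ ^ 2 = (1 - ξ)/2 := by linarith
    rw [hx]
    push_cast
    ring
  have hab : (1/2 * η : ℂ) = a * b := by
    rw [← h3]; ring
  have hcc : (1/2 * starRingEnd ℂ η : ℂ) = starRingEnd ℂ a * starRingEnd ℂ b := by
    have h4 := congrArg (starRingEnd ℂ) h3
    simp only [map_mul, map_ofNat] at h4
    rw [← h4]; ring
  rw [Rpoly]
  simp only [map_mul, map_pow, map_add, eval_C, eval_X, Matrix.cons_val_zero,
    Matrix.cons_val_one, Matrix.head_cons, Matrix.cons_val_two, Matrix.tail_cons]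
  rw [haa, hbb, hab, hcc]
  rcases le_total (d 1) (d 0) with hle | hle
  · have h23 : d 3 ≤ d 2 := by omega
    rw [min_eq_right hle, min_eq_right h23, Nat.sub_eq_zero_of_le hle, pow_zero, mul_one]
    set k := d 0 - d 1 with hk
    obtain ⟨e0, e2⟩ : d 0 = d 1 + k ∧ d 2 = d 3 + k := by omega
    rw [e0, e2, pow_add, pow_add]
    ring
  · have h23 : d 2 ≤ d 3 := by omega
    rw [min_eq_left hle, min_eq_left h23, Nat.sub_eq_zero_of_le hle, pow_zero, mul_one]
    set k := d 1 - d 0 with hk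
    obtain ⟨e1, e3⟩ : d 1 = d 0 + k ∧ d 3 = d 2 + k := by omega
    rw [e1, e3, pow_add, pow_add]
    ring

set_option maxHeartbeats 1000000 in
/-- Fiber integration along the Hopf map maps `P_t(S³)` onto
`P_{⌊t/2⌋}(S²)`: `I_π(P_t(S³)) = P_{⌊t/2⌋}(S²)`. -/
theorem fiber_integration_image (t : ℕ)
    (s : (ℝ × ℂ) → ℂ × ℂ) (hs : ∀ y ∈ S2, s y ∈ S3 ∧ hopf (s y) = y) :
    {g : ↥S2 → ℂ | ∃ p : MvPolynomial (Fin 4) ℂ, p.totalDegree ≤ t ∧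
        ∀ y : ↥S2, g y = ∫ x, polyFun4 p x ∂(μfiber (s y.1))} =
    {g : ↥S2 → ℂ | ∃ q : MvPolynomial (Fin 3) ℂ, q.totalDegree ≤ t / 2 ∧
        ∀ y : ↥S2, g y = polyFun3 q y.1} := by
  ext g
  simp only [Set.mem_setOf_eq]
  constructor
  · rintro ⟨p, hdeg, hval⟩
    classical
    set P : MvPolynomial (Fin 4) ℂ := aeval csub4 p with hP
    have hPdeg : P.totalDegree ≤ t :=
      le_trans (aux_totalDegree_aeval_le csub4 csub4_degree p) (by simpa using hdeg)
    set Q : MvPolynomial (Fin 3) ℂ :=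
      ∑ d ∈ P.support, if d 0 + d 3 = d 1 + d 2 then C (coeff d P) * Rpoly d else 0 with hQ
    have hQdeg : Q.totalDegree ≤ t / 2 := by
      rw [hQ]
      refine totalDegree_finsetSum_le fun d hd => ?_
      by_cases hc : d 0 + d 3 = d 1 + d 2
      · rw [if_pos hc]
        have hsum : d 0 + d 1 + d 2 + d 3 ≤ t := by
          have h5 := (le_totalDegree hd).trans hPdeg
          have h6 : d.sum (fun _ e => e) = ∑ i, d i := Finsupp.sum_fintype _ _ fun _ => rfl
          rw [h6, Fin.sum_univ_four] at h5
          omega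
        refine le_trans (totalDegree_mul _ _) ?_
        rw [totalDegree_C, zero_add]
        refine le_trans (Rpoly_degree d) ?_
        rcases le_total (d 1) (d 0) with hle | hle
        · rw [min_eq_right hle, min_eq_right (show d 3 ≤ d 2 by omega)]
          omega
        · rw [min_eq_left hle, min_eq_left (show d 2 ≤ d 3 by omega)]
          omega
      · rw [if_neg hc]
        simp
    refine ⟨aeval gsub3 Q, le_trans (aux_totalDegree_aeval_le gsub3 gsub3_degree Q)
      (by simpa using hQdeg), ?_⟩
    intro y
    rw [hval y]
    obtain ⟨hS3, hhopf⟩ := hs y.1 y.2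
    set a : ℂ := (s y.1).1 with hadef
    set b : ℂ := (s y.1).2 with hbdef
    have h1 : ‖a‖ ^ 2 + ‖b‖ ^ 2 = 1 := hS3
    have h2 : ‖a‖ ^ 2 - ‖b‖ ^ 2 = y.1.1 := by
      rw [← hhopf]; rfl
    have h3 : 2 * a * b = y.1.2 := by
      rw [← hhopf]; rfl
    have hev : ∀ z : ℂ, polyFun4 p (act (s y.1) z)
        = ∑ d ∈ P.support, (coeff d P * (a ^ d 0 * (starRingEnd ℂ a) ^ d 1 * b ^ d 2
            * (starRingEnd ℂ b) ^ d 3)) * (z ^ (d 0 + d 3) * (starRingEnd ℂ z) ^ (d 1 + d 2)) := by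
      intro z
      have hx : polyFun4 p (act (s y.1) z) = eval (![a * z, starRingEnd ℂ a * starRingEnd ℂ z,
          b * starRingEnd ℂ z, starRingEnd ℂ b * z] : Fin 4 → ℂ) P := by
        rw [hP, aux_eval_aeval]
        unfold polyFun4
        have hfn : (fun i => eval (![a * z, starRingEnd ℂ a * starRingEnd ℂ z,
            b * starRingEnd ℂ z, starRingEnd ℂ b * z] : Fin 4 → ℂ) (csub4 i))
            = fun i => ((coords4 (act (s y.1) z) i : ℝ) : ℂ) := by
          funext i
          have h4 : (![a * z, starRingEnd ℂ a * starRingEnd ℂ z,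
              b * starRingEnd ℂ z, starRingEnd ℂ b * z] : Fin 4 → ℂ)
              = ![(act (s y.1) z).1, starRingEnd ℂ (act (s y.1) z).1,
                 (act (s y.1) z).2, starRingEnd ℂ (act (s y.1) z).2] := by
            funext j
            fin_cases j <;> simp [act, map_mul, hadef, hbdef]
          rw [h4, eval_csub4]
        rw [hfn]
      rw [hx, eval_eq']
      refine Finset.sum_congr rfl fun d _ => ?_
      rw [Fin.prod_univ_four]
      simp only [Matrix.cons_val_zero, Matrix.cons_val_one, Matrix.head_cons,
        Matrix.cons_val_two, Matrix.tail_cons, Matrix.cons_val_three]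
      ring
    have hint : ∫ x, polyFun4 p x ∂(μfiber (s y.1))
        = ∑ d ∈ P.support, (coeff d P * (a ^ d 0 * (starRingEnd ℂ a) ^ d 1 * b ^ d 2
            * (starRingEnd ℂ b) ^ d 3)) * (if d 0 + d 3 = d 1 + d 2 then 1 else 0) := by
      rw [integral_fiber _ _ (continuous_polyFun4 p)]
      rw [show (fun z => polyFun4 p (act (s y.1) z)) = _ from funext hev]
      rw [integral_finset_sum _ (fun d _ =>
        (integrable_moment (d 0 + d 3) (d 1 + d 2)).const_mul _)]
      refine Finset.sum_congr rfl fun d _ => ?_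
      rw [integral_const_mul, circle_moment]
    rw [hint]
    have hq : polyFun3 (aeval gsub3 Q) y.1
        = eval (![(y.1.1 : ℂ), y.1.2, starRingEnd ℂ y.1.2] : Fin 3 → ℂ) Q := by
      unfold polyFun3
      rw [aux_eval_aeval]
      have hv : (fun i => eval (fun j => ((coords3 y.1 j : ℝ) : ℂ)) (gsub3 i))
          = (![(y.1.1 : ℂ), y.1.2, starRingEnd ℂ y.1.2] : Fin 3 → ℂ) :=
        funext fun i => eval_gsub3 (y.1) i
      rw [hv]
    rw [hq, hQ, map_sum]
    refine Finset.sum_congr rfl fun d hd => ?_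
    by_cases hc : d 0 + d 3 = d 1 + d 2
    · rw [if_pos hc, if_pos hc, mul_one, map_mul, eval_C, eval_Rpoly h1 h2 h3 d hc]
    · rw [if_neg hc, if_neg hc, mul_zero, map_zero]
  · rintro ⟨q, hqdeg, hval⟩
    refine ⟨aeval hsub q, ?_, ?_⟩
    · refine le_trans (aux_totalDegree_aeval_le hsub hsub_degree q) ?_
      have h7 := Nat.div_mul_le_self t 2
      calc 2 * q.totalDegree ≤ 2 * (t / 2) := Nat.mul_le_mul_left 2 hqdeg
        _ ≤ t := by omega
    · intro y
      rw [hval y]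
      obtain ⟨hS3, hhopf⟩ := hs y.1 y.2
      rw [integral_fiber _ _ (continuous_polyFun4 _)]
      have heq : ∀ᵐ z ∂(mnormalize μS1), polyFun4 (aeval hsub q) (act (s y.1) z)
          = polyFun3 q y.1 := by
        filter_upwards [nu_ae] with z hz
        unfold polyFun4
        rw [aux_eval_aeval]
        have hfn : (fun i => eval (fun j => ((coords4 (act (s y.1) z) j : ℝ) : ℂ)) (hsub i))
            = fun i => ((coords3 (hopf (act (s y.1) z)) i : ℝ) : ℂ) := by
          funext i; exact eval_hsub _ i
        rw [hfn, hopf_act _ hz, hhopf]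
        rfl
      rw [integral_congr_ae heq]
      simp

end
end

section
/- For the monomial f_{i,j,k,l}(a,b) = a^i ā^j b^k b̄^l on S³ and any y ∈ S², the fiber integral satisfies (I_π f_{i,j,k,l})(y) = 0 whenever i + l ≠ j + k, and when i+l = j+k = m with n = i+j+k+l = 2m, (I_π f_{i,j,k,l})(y) equals 2^{−m}(1+ξ)^{i−k} η^k η̄^{m−i} if i ≥ k and 2^{−m}(1−ξ)^{k−i} η^i η̄^{m−k} if i ≤ k, for y = (ξ,η) ∈ S²; in particular I_π f_{i,j,k,l} ∈ P_{⌊n/2⌋}(S²). -/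
open MeasureTheory Complex

noncomputable section

namespace FiberIntegralAux

open Metric Set
open scoped Pointwise

lemma muS1_univ : μS1 Set.univ = 2 * volume (ball (0:ℂ) 1) := by
  rw [μS1, Measure.map_apply measurable_subtype_coe MeasurableSet.univ]
  simp [Measure.toSphere_apply_univ, Complex.finrank_real_complex]

lemma muS1_rot (w : ℂ) (hw : ‖w‖ = 1) :
    Measure.map (fun z => w * z) μS1 = μS1 := by
  have hw0 : w ≠ 0 := by intro h; simp [h] at hw
  set c : Circle := ⟨w, mem_sphere_zero_iff_norm.2 hw⟩ with hc
  have hmeas : Measurable (fun z : ℂ => w * z) := (continuous_const.mul continuous_id).measurable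
  set cv : Metric.sphere (0:ℂ) 1 → ℂ := Subtype.val with hcv
  have hcvm : Measurable cv := measurable_subtype_coe
  ext t ht
  rw [Measure.map_apply hmeas ht, μS1,
    Measure.map_apply hcvm (hmeas ht),
    Measure.map_apply hcvm ht,
    Measure.toSphere_apply' _ (hcvm (hmeas ht)),
    Measure.toSphere_apply' _ (hcvm ht)]
  congr 1
  have key : Ioo (0:ℝ) 1 • (cv '' (cv ⁻¹' ((fun z : ℂ => w * z) ⁻¹' t)))
      = (fun z : ℂ => w * z) ⁻¹' (Ioo (0:ℝ) 1 • (cv '' (cv ⁻¹' t))) := by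
    ext x
    simp only [Set.mem_smul, Set.mem_preimage, Set.mem_image, Subtype.exists,
      mem_sphere_zero_iff_norm, exists_and_right, exists_eq_right, hcv]
    constructor
    · rintro ⟨r, hr, z, ⟨⟨hz1, hzt⟩, rfl⟩⟩
      exact ⟨r, hr, w * z, ⟨⟨by simpa [norm_mul, hw] using hz1, hzt⟩, by
        simp only [Complex.real_smul]; ring⟩⟩
    · rintro ⟨r, hr, u, ⟨⟨hu1, hut⟩, hx⟩⟩
      refine ⟨r, hr, w⁻¹ * u, ⟨⟨by simpa [norm_mul, norm_inv, hw] using hu1, by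
        simpa [← mul_assoc, mul_inv_cancel₀ hw0] using hut⟩, ?_⟩⟩
      have h2 : x = w⁻¹ * (w * x) := by field_simp
      rw [h2, ← hx]
      simp only [Complex.real_smul]; ring
  rw [key]
  have hmp : MeasurePreserving ((rotation c).toMeasurableEquiv) volume volume :=
    (rotation c).measurePreserving
  have h3 : (fun z : ℂ => w * z) ⁻¹' (Ioo (0:ℝ) 1 • (cv '' (cv ⁻¹' t)))
      = (rotation c).toMeasurableEquiv ⁻¹' (Ioo (0:ℝ) 1 • (cv '' (cv ⁻¹' t))) := by
    congr 1
  rw [h3, ← MeasurableEquiv.map_apply, hmp.map_eq]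

lemma muS1_univ_pos : μS1 Set.univ ≠ 0 := by
  rw [muS1_univ]
  exact mul_ne_zero (by norm_num) (measure_ball_pos volume (0:ℂ) one_pos).ne'

lemma muS1_univ_fin : μS1 Set.univ ≠ ⊤ := by
  rw [muS1_univ]
  exact ENNReal.mul_ne_top (by norm_num) measure_ball_lt_top.ne

instance : IsProbabilityMeasure (mnormalize μS1) := by
  constructor
  rw [mnormalize, Measure.smul_apply, smul_eq_mul,
    ENNReal.inv_mul_cancel muS1_univ_pos muS1_univ_fin]

lemma ae_abs_one : ∀ᵐ z ∂(mnormalize μS1), ‖z‖ = 1 := by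
  have h : μS1 {z : ℂ | ‖z‖ ≠ 1} = 0 := by
    rw [μS1, Measure.map_apply measurable_subtype_coe]
    · convert measure_empty (μ := (volume : Measure ℂ).toSphere)
      ext z
      simp [mem_sphere_zero_iff_norm]
    · exact (isClosed_eq continuous_norm continuous_const).measurableSet.compl
  rw [ae_iff]
  simpa [mnormalize] using Or.inr h

lemma nu_rot (w : ℂ) (hw : ‖w‖ = 1) :
    Measure.map (fun z => w * z) (mnormalize μS1) = mnormalize μS1 := by
  rw [mnormalize, Measure.map_smul, muS1_rot w hw]

lemma integral_rot (w : ℂ) (hw : ‖w‖ = 1) (f : ℂ → ℂ) (hf : Continuous f) :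
    ∫ z, f (w * z) ∂(mnormalize μS1) = ∫ z, f z ∂(mnormalize μS1) := by
  conv_rhs => rw [← nu_rot w hw]
  rw [integral_map (by fun_prop) (hf.aestronglyMeasurable)]

lemma circle_moment (p q : ℕ) :
    ∫ z, z ^ p * (starRingEnd ℂ z) ^ q ∂(mnormalize μS1) = if p = q then 1 else 0 := by
  split_ifs with h
  · subst h
    calc ∫ z, z ^ p * (starRingEnd ℂ z) ^ p ∂(mnormalize μS1)
        = ∫ _z, (1:ℂ) ∂(mnormalize μS1) := by
          refine integral_congr_ae ?_
          filter_upwards [ae_abs_one] with z hz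
          rw [← mul_pow, Complex.mul_conj]
          norm_cast
          rw [← Complex.sq_norm, hz]
          simp
      _ = 1 := by simp
  · have hpq : (p:ℝ) - q ≠ 0 := by
      intro hc
      exact h (by exact_mod_cast sub_eq_zero.mp hc)
    set θ : ℝ := Real.pi / ((p:ℝ) - q) with hθ
    set w : ℂ := Complex.exp (θ * Complex.I) with hwdef
    have hw : ‖w‖ = 1 := Complex.norm_exp_ofReal_mul_I θ
    have key := integral_rot w hw (fun z => z ^ p * (starRingEnd ℂ z) ^ q)
      (by continuity)
    have hfactor : ∀ z : ℂ, (w * z) ^ p * (starRingEnd ℂ (w * z)) ^ q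
        = (-1) * (z ^ p * (starRingEnd ℂ z) ^ q) := by
      intro z
      have hcw : (starRingEnd ℂ) w = Complex.exp (-(θ * Complex.I)) := by
        rw [hwdef, ← Complex.exp_conj]
        congr 1
        rw [map_mul, Complex.conj_ofReal, Complex.conj_I]
        ring
      have hwp : w ^ p * ((starRingEnd ℂ) w) ^ q = -1 := by
        rw [hwdef, hcw, ← Complex.exp_nat_mul, ← Complex.exp_nat_mul, ← Complex.exp_add]
        have heq : (p:ℂ) * (θ * Complex.I) + q * -(θ * Complex.I)
            = (((p:ℝ) - q) * θ : ℝ) * Complex.I := by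
          push_cast; ring
        rw [heq, hθ, mul_div_cancel₀ _ hpq]
        exact Complex.exp_pi_mul_I
      calc (w * z) ^ p * (starRingEnd ℂ (w * z)) ^ q
          = (w ^ p * ((starRingEnd ℂ) w) ^ q) * (z ^ p * (starRingEnd ℂ z) ^ q) := by
            simp [map_mul, mul_pow]; ring
        _ = (-1) * (z ^ p * (starRingEnd ℂ z) ^ q) := by rw [hwp]
    simp only [hfactor] at key
    rw [integral_const_mul] at key
    have h2 : (2:ℂ) * ∫ z, z ^ p * (starRingEnd ℂ z) ^ q ∂(mnormalize μS1) = 0 := by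
      linear_combination -key
    simpa using h2

lemma fiber_integral_eq (i j k l : ℕ) (p : ℂ × ℂ) :
    ∫ x, x.1 ^ i * (starRingEnd ℂ x.1) ^ j * x.2 ^ k * (starRingEnd ℂ x.2) ^ l ∂(μfiber p)
      = p.1 ^ i * (starRingEnd ℂ p.1) ^ j * p.2 ^ k * (starRingEnd ℂ p.2) ^ l *
        (if i + l = j + k then 1 else 0) := by
  have hact : Measurable (act p) := by
    apply Measurable.prod
    · exact (continuous_const.mul continuous_id).measurable
    · exact (continuous_const.mul Complex.continuous_conj).measurable
  have hf : Continuous (fun x : ℂ × ℂ =>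
      x.1 ^ i * (starRingEnd ℂ x.1) ^ j * x.2 ^ k * (starRingEnd ℂ x.2) ^ l) := by
    continuity
  rw [μfiber, integral_map hact.aemeasurable hf.aestronglyMeasurable]
  have hpt : ∀ z : ℂ, (act p z).1 ^ i * (starRingEnd ℂ (act p z).1) ^ j *
      (act p z).2 ^ k * (starRingEnd ℂ (act p z).2) ^ l
      = (p.1 ^ i * (starRingEnd ℂ p.1) ^ j * p.2 ^ k * (starRingEnd ℂ p.2) ^ l) *
        (z ^ (i + l) * (starRingEnd ℂ z) ^ (j + k)) := by
    intro z
    simp only [act, map_mul, mul_pow, Complex.conj_conj, pow_add]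
    ring
  simp only [hpt]
  rw [integral_const_mul, circle_moment]

end FiberIntegralAux

/-- Fiber integrals of the monomials `f_{i,j,k,l}(a,b) = aⁱ āʲ bᵏ b̄ˡ`:
they vanish unless `i+l = j+k`, in the balanced case `i+l = j+k = m` they are given by the
stated explicit formulas in `(ξ,η)`, and in particular `I_π f_{i,j,k,l}` is (the
restriction to `S²` of) a polynomial of degree at most `⌊(i+j+k+l)/2⌋`. -/
theorem fiber_integral_monomial (i j k l : ℕ)
    (s : (ℝ × ℂ) → ℂ × ℂ) (hs : ∀ y ∈ S2, s y ∈ S3 ∧ hopf (s y) = y) :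
    (∀ y ∈ S2, i + l ≠ j + k →
      ∫ x, x.1 ^ i * (starRingEnd ℂ x.1) ^ j * x.2 ^ k * (starRingEnd ℂ x.2) ^ l ∂(μfiber (s y)) = 0) ∧
    (∀ ξ : ℝ, ∀ η : ℂ, (ξ, η) ∈ S2 → ∀ m : ℕ, i + l = m → j + k = m →
      (k ≤ i →
        ∫ x, x.1 ^ i * (starRingEnd ℂ x.1) ^ j * x.2 ^ k * (starRingEnd ℂ x.2) ^ l ∂(μfiber (s (ξ, η))) =
          ((2 : ℂ))⁻¹ ^ m * (((1 + ξ : ℝ)) : ℂ) ^ (i - k) * η ^ k *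
            (starRingEnd ℂ η) ^ (m - i)) ∧
      (i ≤ k →
        ∫ x, x.1 ^ i * (starRingEnd ℂ x.1) ^ j * x.2 ^ k * (starRingEnd ℂ x.2) ^ l ∂(μfiber (s (ξ, η))) =
          ((2 : ℂ))⁻¹ ^ m * (((1 - ξ : ℝ)) : ℂ) ^ (k - i) * η ^ i *
            (starRingEnd ℂ η) ^ (m - k))) ∧
    (∃ q : MvPolynomial (Fin 3) ℂ, q.totalDegree ≤ (i + j + k + l) / 2 ∧
      ∀ y ∈ S2, ∫ x, x.1 ^ i * (starRingEnd ℂ x.1) ^ j * x.2 ^ k * (starRingEnd ℂ x.2) ^ l ∂(μfiber (s y)) = polyFun3 q y) := by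
  classical
  open FiberIntegralAux in
  have key := fun (p : ℂ × ℂ) => fiber_integral_eq i j k l p
  -- main balanced-case computation
  have main2 : ∀ ξ : ℝ, ∀ η : ℂ, (ξ, η) ∈ S2 → ∀ m : ℕ, i + l = m → j + k = m →
      (k ≤ i →
        ∫ x, x.1 ^ i * (starRingEnd ℂ x.1) ^ j * x.2 ^ k * (starRingEnd ℂ x.2) ^ l ∂(μfiber (s (ξ, η))) =
          ((2 : ℂ))⁻¹ ^ m * (((1 + ξ : ℝ)) : ℂ) ^ (i - k) * η ^ k *
            (starRingEnd ℂ η) ^ (m - i)) ∧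
      (i ≤ k →
        ∫ x, x.1 ^ i * (starRingEnd ℂ x.1) ^ j * x.2 ^ k * (starRingEnd ℂ x.2) ^ l ∂(μfiber (s (ξ, η))) =
          ((2 : ℂ))⁻¹ ^ m * (((1 - ξ : ℝ)) : ℂ) ^ (k - i) * η ^ i *
            (starRingEnd ℂ η) ^ (m - k)) := by
    intro ξ η hy m hil hjk
    obtain ⟨hS3, hhopf⟩ := hs (ξ, η) hy
    set a : ℂ := (s (ξ, η)).1 with ha
    set b : ℂ := (s (ξ, η)).2 with hb
    have hS3' : ‖a‖ ^ 2 + ‖b‖ ^ 2 = 1 := hS3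
    have h1 : ‖a‖ ^ 2 - ‖b‖ ^ 2 = ξ := congrArg Prod.fst hhopf
    have h2 : 2 * a * b = η := congrArg Prod.snd hhopf
    have ra : a * (starRingEnd ℂ a) = (((1 + ξ) / 2 : ℝ) : ℂ) := by
      rw [Complex.mul_conj]
      norm_cast
      rw [← Complex.sq_norm]
      linarith
    have rb : b * (starRingEnd ℂ b) = (((1 - ξ) / 2 : ℝ) : ℂ) := by
      rw [Complex.mul_conj]
      norm_cast
      rw [← Complex.sq_norm]
      linarith
    have rab : a * b = η / 2 := by rw [← h2]; ring
    have rcab : (starRingEnd ℂ a) * (starRingEnd ℂ b) = (starRingEnd ℂ η) / 2 := by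
      rw [← map_mul, rab, map_div₀, map_ofNat]
    constructor
    · intro hki
      rw [key (s (ξ, η)), if_pos (by omega), mul_one]
      obtain ⟨e, rfl⟩ : ∃ e, i = k + e := ⟨i - k, by omega⟩
      have hjv : j = e + l := by omega
      have hmv : m = k + e + l := by omega
      subst hjv hmv
      have hik : k + e - k = e := by omega
      have hmi : k + e + l - (k + e) = l := by omega
      rw [hik, hmi]
      calc a ^ (k + e) * (starRingEnd ℂ a) ^ (e + l) * b ^ k * (starRingEnd ℂ b) ^ l
          = (a * (starRingEnd ℂ a)) ^ e * (a * b) ^ k *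
            ((starRingEnd ℂ a) * (starRingEnd ℂ b)) ^ l := by ring
        _ = (((1 + ξ) / 2 : ℝ) : ℂ) ^ e * (η / 2) ^ k * ((starRingEnd ℂ η) / 2) ^ l := by
            rw [ra, rab, rcab]
        _ = (2 : ℂ)⁻¹ ^ (k + e + l) * (((1 + ξ : ℝ)) : ℂ) ^ e * η ^ k *
            (starRingEnd ℂ η) ^ l := by
            have hcast : (((1 + ξ) / 2 : ℝ) : ℂ) = ((1 + ξ : ℝ) : ℂ) * 2⁻¹ := by
              push_cast; ring
            rw [hcast]
            ring
    · intro hik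
      rw [key (s (ξ, η)), if_pos (by omega), mul_one]
      obtain ⟨e, rfl⟩ : ∃ e, k = i + e := ⟨k - i, by omega⟩
      have hlv : l = e + j := by omega
      have hmv : m = i + e + j := by omega
      subst hlv hmv
      have hki : i + e - i = e := by omega
      have hmk : i + e + j - (i + e) = j := by omega
      rw [hki, hmk]
      calc a ^ i * (starRingEnd ℂ a) ^ j * b ^ (i + e) * (starRingEnd ℂ b) ^ (e + j)
          = (b * (starRingEnd ℂ b)) ^ e * (a * b) ^ i *
            ((starRingEnd ℂ a) * (starRingEnd ℂ b)) ^ j := by ring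
        _ = (((1 - ξ) / 2 : ℝ) : ℂ) ^ e * (η / 2) ^ i * ((starRingEnd ℂ η) / 2) ^ j := by
            rw [rb, rab, rcab]
        _ = (2 : ℂ)⁻¹ ^ (i + e + j) * (((1 - ξ : ℝ)) : ℂ) ^ e * η ^ i *
            (starRingEnd ℂ η) ^ j := by
            have hcast : (((1 - ξ) / 2 : ℝ) : ℂ) = ((1 - ξ : ℝ) : ℂ) * 2⁻¹ := by
              push_cast; ring
            rw [hcast]
            ring
  refine ⟨?_, main2, ?_⟩
  · intro y _ hne
    rw [key (s y), if_neg (by omega), mul_zero]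
  · -- polynomial part
    by_cases hbal : i + l = j + k
    · set m : ℕ := i + l with hm
      have hsum : (i + j + k + l) / 2 = m := by omega
      have hconj : ∀ η : ℂ, ((η.re : ℂ) - Complex.I * (η.im : ℂ)) = starRingEnd ℂ η := by
        intro η
        apply Complex.ext <;> simp
      have hre : ∀ η : ℂ, ((η.re : ℂ) + Complex.I * (η.im : ℂ)) = η := by
        intro η
        rw [mul_comm]
        exact Complex.re_add_im η
      have hconj' : ∀ η : ℂ, ((η.re : ℂ) + -Complex.I * (η.im : ℂ)) = starRingEnd ℂ η := by
        intro η
        rw [← hconj η]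
        ring
      rcases le_total k i with hki | hik
      · refine ⟨MvPolynomial.C ((2:ℂ)⁻¹ ^ m) * (1 + MvPolynomial.X 0) ^ (i - k) *
          (MvPolynomial.X 1 + MvPolynomial.C Complex.I * MvPolynomial.X 2) ^ k *
          (MvPolynomial.X 1 + MvPolynomial.C (-Complex.I) * MvPolynomial.X 2) ^ (m - i),
          ?_, ?_⟩
        · rw [hsum]
          refine le_trans (MvPolynomial.totalDegree_mul _ _) ?_
          have d1 : ((MvPolynomial.C ((2:ℂ)⁻¹ ^ m) * (1 + MvPolynomial.X 0) ^ (i - k) *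
              (MvPolynomial.X 1 + MvPolynomial.C Complex.I * MvPolynomial.X 2) ^ k :
                MvPolynomial (Fin 3) ℂ)).totalDegree ≤ (i - k) + k := by
            refine le_trans (MvPolynomial.totalDegree_mul _ _) ?_
            gcongr
            · refine le_trans (MvPolynomial.totalDegree_mul _ _) ?_
              simp only [MvPolynomial.totalDegree_C, zero_add]
              refine le_trans (MvPolynomial.totalDegree_pow _ _) ?_
              have : ((1 + MvPolynomial.X 0 : MvPolynomial (Fin 3) ℂ)).totalDegree ≤ 1 :=
                le_trans (MvPolynomial.totalDegree_add _ _)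
                  (by simp [MvPolynomial.totalDegree_X])
              calc (i - k) * (1 + MvPolynomial.X 0 : MvPolynomial (Fin 3) ℂ).totalDegree
                  ≤ (i - k) * 1 := by gcongr
                _ = i - k := by ring
            · refine le_trans (MvPolynomial.totalDegree_pow _ _) ?_
              have : ((MvPolynomial.X 1 + MvPolynomial.C Complex.I * MvPolynomial.X 2 :
                  MvPolynomial (Fin 3) ℂ)).totalDegree ≤ 1 := by
                refine le_trans (MvPolynomial.totalDegree_add _ _) ?_
                simp only [max_le_iff, MvPolynomial.totalDegree_X]
                exact ⟨le_refl 1, le_trans (MvPolynomial.totalDegree_mul _ _)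
                  (by simp [MvPolynomial.totalDegree_X])⟩
              calc k * (MvPolynomial.X 1 + MvPolynomial.C Complex.I * MvPolynomial.X 2 :
                  MvPolynomial (Fin 3) ℂ).totalDegree ≤ k * 1 := by gcongr
                _ = k := by ring
          have d2 : ((MvPolynomial.X 1 + MvPolynomial.C (-Complex.I) * MvPolynomial.X 2 :
              MvPolynomial (Fin 3) ℂ) ^ (m - i)).totalDegree ≤ m - i := by
            refine le_trans (MvPolynomial.totalDegree_pow _ _) ?_
            have : ((MvPolynomial.X 1 + MvPolynomial.C (-Complex.I) * MvPolynomial.X 2 :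
                MvPolynomial (Fin 3) ℂ)).totalDegree ≤ 1 := by
              refine le_trans (MvPolynomial.totalDegree_add _ _) ?_
              simp only [max_le_iff, MvPolynomial.totalDegree_X]
              exact ⟨le_refl 1, le_trans (MvPolynomial.totalDegree_mul _ _)
                (by simp [MvPolynomial.totalDegree_X])⟩
            calc (m - i) * (MvPolynomial.X 1 + MvPolynomial.C (-Complex.I) * MvPolynomial.X 2 :
                MvPolynomial (Fin 3) ℂ).totalDegree ≤ (m - i) * 1 := by gcongr
              _ = m - i := by ring
          calc _ ≤ ((i - k) + k) + (m - i) := add_le_add d1 d2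
            _ ≤ m := by omega
        · intro y hy
          have hy' : (y.1, y.2) ∈ S2 := by simpa using hy
          have := (main2 y.1 y.2 hy' m hm.symm (by omega)).1 hki
          have hyeq : (y.1, y.2) = y := rfl
          rw [hyeq] at this
          rw [this, polyFun3, coords3]
          simp only [map_mul, map_pow, map_add, map_one, map_neg, MvPolynomial.eval_C,
            MvPolynomial.eval_X, Matrix.cons_val_zero, Matrix.cons_val_one, Matrix.head_cons,
            Matrix.cons_val_two, Matrix.tail_cons]
          rw [hre y.2, hconj' y.2]
          push_cast
          ring
      · refine ⟨MvPolynomial.C ((2:ℂ)⁻¹ ^ m) *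
          (1 + MvPolynomial.C (-1) * MvPolynomial.X 0) ^ (k - i) *
          (MvPolynomial.X 1 + MvPolynomial.C Complex.I * MvPolynomial.X 2) ^ i *
          (MvPolynomial.X 1 + MvPolynomial.C (-Complex.I) * MvPolynomial.X 2) ^ (m - k),
          ?_, ?_⟩
        · rw [hsum]
          have e0 : ((1 + MvPolynomial.C (-1) * MvPolynomial.X 0 :
              MvPolynomial (Fin 3) ℂ)).totalDegree ≤ 1 := by
            refine le_trans (MvPolynomial.totalDegree_add _ _) ?_
            simp only [max_le_iff]
            constructor
            · simp
            · exact le_trans (MvPolynomial.totalDegree_mul _ _)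
                (by simp [MvPolynomial.totalDegree_X])
          have e1 : ((MvPolynomial.X 1 + MvPolynomial.C Complex.I * MvPolynomial.X 2 :
              MvPolynomial (Fin 3) ℂ)).totalDegree ≤ 1 := by
            refine le_trans (MvPolynomial.totalDegree_add _ _) ?_
            simp only [max_le_iff, MvPolynomial.totalDegree_X]
            exact ⟨le_refl 1, le_trans (MvPolynomial.totalDegree_mul _ _)
              (by simp [MvPolynomial.totalDegree_X])⟩
          have e2 : ((MvPolynomial.X 1 + MvPolynomial.C (-Complex.I) * MvPolynomial.X 2 :
              MvPolynomial (Fin 3) ℂ)).totalDegree ≤ 1 := by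
            refine le_trans (MvPolynomial.totalDegree_add _ _) ?_
            simp only [max_le_iff, MvPolynomial.totalDegree_X]
            exact ⟨le_refl 1, le_trans (MvPolynomial.totalDegree_mul _ _)
              (by simp [MvPolynomial.totalDegree_X])⟩
          refine le_trans (MvPolynomial.totalDegree_mul _ _) ?_
          have d1 : ((MvPolynomial.C ((2:ℂ)⁻¹ ^ m) *
              (1 + MvPolynomial.C (-1) * MvPolynomial.X 0) ^ (k - i) *
              (MvPolynomial.X 1 + MvPolynomial.C Complex.I * MvPolynomial.X 2) ^ i :
                MvPolynomial (Fin 3) ℂ)).totalDegree ≤ (k - i) + i := by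
            refine le_trans (MvPolynomial.totalDegree_mul _ _) ?_
            gcongr
            · refine le_trans (MvPolynomial.totalDegree_mul _ _) ?_
              simp only [MvPolynomial.totalDegree_C, zero_add]
              refine le_trans (MvPolynomial.totalDegree_pow _ _) ?_
              calc (k - i) * (1 + MvPolynomial.C (-1) * MvPolynomial.X 0 :
                  MvPolynomial (Fin 3) ℂ).totalDegree ≤ (k - i) * 1 := by gcongr
                _ = k - i := by ring
            · refine le_trans (MvPolynomial.totalDegree_pow _ _) ?_
              calc i * (MvPolynomial.X 1 + MvPolynomial.C Complex.I * MvPolynomial.X 2 :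
                  MvPolynomial (Fin 3) ℂ).totalDegree ≤ i * 1 := by gcongr
                _ = i := by ring
          have d2 : ((MvPolynomial.X 1 + MvPolynomial.C (-Complex.I) * MvPolynomial.X 2 :
              MvPolynomial (Fin 3) ℂ) ^ (m - k)).totalDegree ≤ m - k := by
            refine le_trans (MvPolynomial.totalDegree_pow _ _) ?_
            calc (m - k) * (MvPolynomial.X 1 + MvPolynomial.C (-Complex.I) * MvPolynomial.X 2 :
                MvPolynomial (Fin 3) ℂ).totalDegree ≤ (m - k) * 1 := by gcongr
              _ = m - k := by ring
          calc _ ≤ ((k - i) + i) + (m - k) := add_le_add d1 d2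
            _ ≤ m := by omega
        · intro y hy
          have hy' : (y.1, y.2) ∈ S2 := by simpa using hy
          have := (main2 y.1 y.2 hy' m hm.symm (by omega)).2 hik
          have hyeq : (y.1, y.2) = y := rfl
          rw [hyeq] at this
          rw [this, polyFun3, coords3]
          simp only [map_mul, map_pow, map_add, map_one, map_neg, MvPolynomial.eval_C,
            MvPolynomial.eval_X, Matrix.cons_val_zero, Matrix.cons_val_one, Matrix.head_cons,
            Matrix.cons_val_two, Matrix.tail_cons]
          rw [hre y.2, hconj' y.2]
          push_cast
          ring
    · refine ⟨0, by simp, fun y _ => ?_⟩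
      rw [key (s y), if_neg hbal, mul_zero, polyFun3]
      simp


end
end
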